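/- arXiv:2510.24967 — 9 statements merged into one kernel-verified Lean document; each statement's English description precedes it below -/
import Mathlib

section
/- Let f : ℝⁿ → ℝ be twice continuously differentiable, μ-strongly convex with μ > 0, and with L-Lipschitz Hessian, L > 0. Let R ∈ ℝ^{p×n} have full row rank p ≤ n, P := Rᵀ, and suppose all singular values of P lie in [ω, ξ] with 0 < ω ≤ ξ. If x⁺ := x − P(R∇²f(x)P)⁻¹R∇f(x) is the coarse step at x ∈ ℝⁿ, then ‖R∇f(x⁺)‖ ≤ (Lξ³/(2μ²ω⁴)) ‖R∇f(x)‖². -/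
open Matrix

noncomputable section

/-- The spectral (`ℓ²`-operator) norm of a real matrix, i.e. the operator norm of the
induced linear map between Euclidean spaces. -/
def Matrix.specNorm {m n : ℕ} (A : Matrix (Fin m) (Fin n) ℝ) : ℝ :=
  ‖LinearMap.toContinuousLinearMap (Matrix.toEuclideanLin A)‖

/-- The `i`-th singular value of `P := Rᵀ`, i.e. the square root of the `i`-th eigenvalue of
the positive semidefinite matrix `PᴴP = R Rᴴ`. -/
def Matrix.singularValueT {p n : ℕ} (R : Matrix (Fin p) (Fin n) ℝ) (i : Fin p) : ℝ :=
  Real.sqrt ((Matrix.isHermitian_mul_conjTranspose_self R).eigenvalues i)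

section Helpers

open RealInnerProductSpace intervalIntegral

private lemma inner_tel {m n : ℕ} (A : Matrix (Fin m) (Fin n) ℝ) (w : EuclideanSpace ℝ (Fin n))
    (v : EuclideanSpace ℝ (Fin m)) :
    ⟪Matrix.toEuclideanLin A w, v⟫ = ⟪w, Matrix.toEuclideanLin Aᵀ v⟫ := by
  simp only [Matrix.toEuclideanLin_apply, PiLp.inner_apply, RCLike.inner_apply, conj_trivial]
  change (WithLp.equiv 2 (Fin m → ℝ)) v ⬝ᵥ (A *ᵥ (WithLp.equiv 2 (Fin n → ℝ)) w)
      = (Aᵀ *ᵥ (WithLp.equiv 2 (Fin m → ℝ)) v) ⬝ᵥ (WithLp.equiv 2 (Fin n → ℝ)) w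
  rw [Matrix.dotProduct_mulVec, Matrix.mulVec_transpose]

private lemma tel_mul {m k n : ℕ} (A : Matrix (Fin m) (Fin k) ℝ) (B : Matrix (Fin k) (Fin n) ℝ)
    (v : EuclideanSpace ℝ (Fin n)) :
    Matrix.toEuclideanLin (A * B) v = Matrix.toEuclideanLin A (Matrix.toEuclideanLin B v) := by
  simp [Matrix.toEuclideanLin_apply, Matrix.mulVec_mulVec]

private lemma quad_eigen_bound {m : ℕ} {A : Matrix (Fin m) (Fin m) ℝ} (hA : A.IsHermitian)
    {a b : ℝ} (hab : ∀ i, hA.eigenvalues i ∈ Set.Icc a b) (v : EuclideanSpace ℝ (Fin m)) :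
    a * ‖v‖^2 ≤ ⟪v, Matrix.toEuclideanLin A v⟫ ∧
      ⟪v, Matrix.toEuclideanLin A v⟫ ≤ b * ‖v‖^2 := by
  have hAt : Aᵀ = A := by
    have := hA.eq
    rwa [Matrix.conjTranspose] at this
  have hsym : ∀ u w : EuclideanSpace ℝ (Fin m),
      ⟪Matrix.toEuclideanLin A u, w⟫ = ⟪u, Matrix.toEuclideanLin A w⟫ := by
    intro u w; rw [inner_tel, hAt]
  set B := hA.eigenvectorBasis with hB
  have hAB : ∀ j, Matrix.toEuclideanLin A (B j) = hA.eigenvalues j • B j := by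
    intro j
    refine (WithLp.equiv 2 (Fin m → ℝ)).injective ?_
    ext k
    exact congrFun (hA.mulVec_eigenvectorBasis j) k
  have hrepr : ∀ j, B.repr (Matrix.toEuclideanLin A v) j = hA.eigenvalues j * B.repr v j := by
    intro j
    rw [B.repr_apply_apply, B.repr_apply_apply, ← hsym, hAB j, real_inner_smul_left]
  have hinner : ∀ u w : EuclideanSpace ℝ (Fin m), ⟪u, w⟫ = ∑ j, B.repr u j * B.repr w j := by
    intro u w
    rw [← B.repr.inner_map_map u w]
    simp only [PiLp.inner_apply, RCLike.inner_apply, conj_trivial]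
    exact Finset.sum_congr rfl fun j _ => mul_comm _ _
  have h1 : ⟪v, Matrix.toEuclideanLin A v⟫ = ∑ j, hA.eigenvalues j * (B.repr v j)^2 := by
    rw [hinner]
    refine Finset.sum_congr rfl fun j _ => ?_
    rw [hrepr j]; ring
  have h2 : ‖v‖^2 = ∑ j, (B.repr v j)^2 := by
    rw [← real_inner_self_eq_norm_sq, hinner]
    refine Finset.sum_congr rfl fun j _ => (sq (B.repr v j)).symm
  constructor
  · rw [h1, h2, Finset.mul_sum]
    exact Finset.sum_le_sum fun j _ =>
      mul_le_mul_of_nonneg_right (hab j).1 (sq_nonneg _)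
  · rw [h1, h2, Finset.mul_sum]
    exact Finset.sum_le_sum fun j _ =>
      mul_le_mul_of_nonneg_right (hab j).2 (sq_nonneg _)

private lemma Rt_bounds {p n : ℕ} (R : Matrix (Fin p) (Fin n) ℝ) {ω ξ : ℝ} (hω : 0 ≤ ω)
    (hξ : 0 ≤ ξ)
    (hsv : ∀ i, R.singularValueT i ∈ Set.Icc ω ξ) (v : EuclideanSpace ℝ (Fin p)) :
    ω * ‖v‖ ≤ ‖Matrix.toEuclideanLin Rᵀ v‖ ∧ ‖Matrix.toEuclideanLin Rᵀ v‖ ≤ ξ * ‖v‖ := by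
  have hH := Matrix.isHermitian_mul_conjTranspose_self R
  have hPSD := Matrix.posSemidef_self_mul_conjTranspose R
  have heig : ∀ i, hH.eigenvalues i ∈ Set.Icc (ω^2) (ξ^2) := by
    intro i
    have h0 : 0 ≤ hH.eigenvalues i := hPSD.eigenvalues_nonneg i
    have hs1 : ω ≤ Real.sqrt (hH.eigenvalues i) := (hsv i).1
    have hs2 : Real.sqrt (hH.eigenvalues i) ≤ ξ := (hsv i).2
    have he : hH.eigenvalues i = Real.sqrt (hH.eigenvalues i) ^ 2 :=
      (Real.sq_sqrt h0).symm
    constructor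
    · rw [he]; exact pow_le_pow_left₀ hω hs1 2
    · rw [he]; exact pow_le_pow_left₀ (Real.sqrt_nonneg _) hs2 2
  have key : ‖Matrix.toEuclideanLin Rᵀ v‖^2 = ⟪v, Matrix.toEuclideanLin (R * Rᴴ) v⟫ := by
    rw [← real_inner_self_eq_norm_sq, inner_tel, Matrix.transpose_transpose,
      Matrix.conjTranspose_eq_transpose_of_trivial, tel_mul]
  obtain ⟨hl, hr⟩ := quad_eigen_bound hH heig v
  rw [← key] at hl hr
  constructor
  · have h2 : (ω * ‖v‖)^2 ≤ ‖Matrix.toEuclideanLin Rᵀ v‖^2 := by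
      rw [mul_pow]; nlinarith [hl]
    nlinarith [norm_nonneg (Matrix.toEuclideanLin Rᵀ v), norm_nonneg v,
      mul_nonneg hω (norm_nonneg v), h2]
  · have h2 : ‖Matrix.toEuclideanLin Rᵀ v‖^2 ≤ (ξ * ‖v‖)^2 := by
      rw [mul_pow]; nlinarith [hr]
    nlinarith [norm_nonneg (Matrix.toEuclideanLin Rᵀ v), norm_nonneg v,
      mul_nonneg hξ (norm_nonneg v), h2]

private lemma R_bound {p n : ℕ} (R : Matrix (Fin p) (Fin n) ℝ) {ξ : ℝ} (hξ : 0 ≤ ξ)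
    (hRt : ∀ v : EuclideanSpace ℝ (Fin p), ‖Matrix.toEuclideanLin Rᵀ v‖ ≤ ξ * ‖v‖)
    (w : EuclideanSpace ℝ (Fin n)) :
    ‖Matrix.toEuclideanLin R w‖ ≤ ξ * ‖w‖ := by
  set u := Matrix.toEuclideanLin R w with hu
  have h1 : ‖u‖^2 = ⟪w, Matrix.toEuclideanLin Rᵀ u⟫ := by
    rw [← real_inner_self_eq_norm_sq, hu, inner_tel, real_inner_comm, inner_tel,
      Matrix.transpose_transpose]
  have h2 : ⟪w, Matrix.toEuclideanLin Rᵀ u⟫ ≤ ‖w‖ * (ξ * ‖u‖) :=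
    le_trans (real_inner_le_norm _ _) (by
      have := hRt u
      nlinarith [norm_nonneg w])
  nlinarith [norm_nonneg u, norm_nonneg w, mul_nonneg hξ (norm_nonneg w)]

private lemma sc_bound {n : ℕ} {M : Matrix (Fin n) (Fin n) ℝ} {μ : ℝ}
    (h : (M - μ • (1 : Matrix (Fin n) (Fin n) ℝ)).PosSemidef)
    (v : EuclideanSpace ℝ (Fin n)) :
    μ * ‖v‖^2 ≤ ⟪v, Matrix.toEuclideanLin M v⟫ := by
  have h0 := h.re_dotProduct_nonneg ((WithLp.equiv 2 (Fin n → ℝ)) v)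
  simp only [RCLike.re_to_real] at h0
  have hexp : star ((WithLp.equiv 2 (Fin n → ℝ)) v) ⬝ᵥ
      (M - μ • (1 : Matrix (Fin n) (Fin n) ℝ)) *ᵥ ((WithLp.equiv 2 (Fin n → ℝ)) v)
      = ⟪v, Matrix.toEuclideanLin M v⟫ - μ * ‖v‖^2 := by
    rw [Matrix.sub_mulVec, dotProduct_sub, Matrix.smul_mulVec,
      Matrix.one_mulVec, dotProduct_smul, ← real_inner_self_eq_norm_sq]
    simp only [smul_eq_mul, PiLp.inner_apply, RCLike.inner_apply, conj_trivial, dotProduct,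
      star_trivial, Matrix.toEuclideanLin_apply, PiLp.toLp_apply, WithLp.equiv_apply, mul_comm]
  rw [hexp] at h0
  linarith

private lemma lower_norm_bound {m : ℕ} {A : Matrix (Fin m) (Fin m) ℝ} {c : ℝ}
    (h : ∀ v : EuclideanSpace ℝ (Fin m), c * ‖v‖^2 ≤ ⟪v, Matrix.toEuclideanLin A v⟫)
    (v : EuclideanSpace ℝ (Fin m)) : c * ‖v‖ ≤ ‖Matrix.toEuclideanLin A v‖ := by
  rcases eq_or_lt_of_le (norm_nonneg v) with hv | hv
  · rw [← hv]; simp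
  · have h1 := h v
    have h2 : ⟪v, Matrix.toEuclideanLin A v⟫ ≤ ‖v‖ * ‖Matrix.toEuclideanLin A v‖ :=
      real_inner_le_norm _ _
    have := le_trans h1 h2
    rw [pow_two, ← mul_assoc] at this
    exact le_of_mul_le_mul_right (by linarith [this]) hv

private lemma inv_facts {m : ℕ} {A : Matrix (Fin m) (Fin m) ℝ} {c : ℝ} (hc : 0 < c)
    (h : ∀ v : EuclideanSpace ℝ (Fin m), c * ‖v‖^2 ≤ ⟪v, Matrix.toEuclideanLin A v⟫) :
    A * A⁻¹ = 1 ∧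
      ∀ w : EuclideanSpace ℝ (Fin m), ‖Matrix.toEuclideanLin A⁻¹ w‖ ≤ c⁻¹ * ‖w‖ := by
  have hlow := lower_norm_bound h
  have hinj : Function.Injective (Matrix.toEuclideanLin A) := by
    intro u w huw
    have h0 : Matrix.toEuclideanLin A (u - w) = 0 := by
      rw [map_sub, huw, sub_self]
    have := hlow (u - w)
    rw [h0, norm_zero] at this
    have : ‖u - w‖ ≤ 0 := by
      by_contra hcon
      push_neg at hcon
      nlinarith
    have : u - w = 0 := norm_le_zero_iff.mp this
    exact sub_eq_zero.mp this
  have hinj2 : Function.Injective (A.mulVec) := by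
    intro x y hxy
    have : Matrix.toEuclideanLin A ((WithLp.equiv 2 (Fin m → ℝ)).symm x)
        = Matrix.toEuclideanLin A ((WithLp.equiv 2 (Fin m → ℝ)).symm y) := by
      simp only [WithLp.equiv_symm_apply, Matrix.toEuclideanLin_apply_piLp_toLp, hxy]
    have := hinj this
    simpa using congrArg (WithLp.equiv 2 (Fin m → ℝ)) this
  have hunit : IsUnit A := Matrix.mulVec_injective_iff_isUnit.mp hinj2
  have hmul : A * A⁻¹ = 1 := Matrix.mul_nonsing_inv _ (A.isUnit_iff_isUnit_det.mp hunit)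
  refine ⟨hmul, fun w => ?_⟩
  have hAv : Matrix.toEuclideanLin A (Matrix.toEuclideanLin A⁻¹ w) = w := by
    rw [← tel_mul, hmul]
    simp [Matrix.toEuclideanLin_apply, Matrix.one_mulVec]
  have := hlow (Matrix.toEuclideanLin A⁻¹ w)
  rw [hAv] at this
  rw [le_inv_mul_iff₀ hc] at *
  linarith

private lemma clm_apply {n : ℕ} (M : Matrix (Fin n) (Fin n) ℝ) (v : EuclideanSpace ℝ (Fin n)) :
    Matrix.toEuclideanCLM (𝕜 := ℝ) M v = Matrix.toEuclideanLin M v := rfl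

private lemma taylor_step {n p : ℕ} (R : Matrix (Fin p) (Fin n) ℝ)
    (g : EuclideanSpace ℝ (Fin n) → EuclideanSpace ℝ (Fin n))
    (H : EuclideanSpace ℝ (Fin n) → Matrix (Fin n) (Fin n) ℝ)
    (hH : ∀ y, HasFDerivAt g (Matrix.toEuclideanCLM (𝕜 := ℝ) (H y)) y)
    {L ξ : ℝ} (hL : 0 ≤ L) (hξ : 0 ≤ ξ)
    (hLip : ∀ y z v, ‖Matrix.toEuclideanLin (H y) v - Matrix.toEuclideanLin (H z) v‖
        ≤ L * ‖y - z‖ * ‖v‖)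
    (hRb : ∀ w, ‖Matrix.toEuclideanLin R w‖ ≤ ξ * ‖w‖)
    (x d : EuclideanSpace ℝ (Fin n)) :
    ‖Matrix.toEuclideanLin R (g (x + d)) - Matrix.toEuclideanLin R (g x)
        - Matrix.toEuclideanLin R (Matrix.toEuclideanLin (H x) d)‖ ≤ ξ * L * ‖d‖^2 / 2 := by
  set RL : EuclideanSpace ℝ (Fin n) →L[ℝ] EuclideanSpace ℝ (Fin p) :=
    LinearMap.toContinuousLinearMap (Matrix.toEuclideanLin R) with hRL
  have hRLapp : ∀ w, RL w = Matrix.toEuclideanLin R w := fun w => rfl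
  set c : ℝ → EuclideanSpace ℝ (Fin n) := fun t => x + t • d with hc
  have hcd : ∀ t : ℝ, HasDerivAt c d t := by
    intro t
    have h1 : HasDerivAt (fun s : ℝ => s • d) ((1:ℝ) • d) t :=
      (hasDerivAt_id t).smul_const d
    rw [one_smul] at h1
    exact h1.const_add x
  set ψ : ℝ → EuclideanSpace ℝ (Fin p) := fun t =>
    RL (Matrix.toEuclideanLin (H (c t)) d) - RL (Matrix.toEuclideanLin (H x) d) with hψ
  set φ : ℝ → EuclideanSpace ℝ (Fin p) := fun t =>
    RL (g (c t)) - t • RL (Matrix.toEuclideanLin (H x) d) with hφ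
  have hderiv : ∀ t : ℝ, HasDerivAt φ (ψ t) t := by
    intro t
    have hg : HasDerivAt (fun s => g (c s)) (Matrix.toEuclideanCLM (𝕜 := ℝ) (H (c t)) d) t :=
      (hH (c t)).comp_hasDerivAt t (hcd t)
    have hRg : HasDerivAt (fun s => RL (g (c s)))
        (RL (Matrix.toEuclideanCLM (𝕜 := ℝ) (H (c t)) d)) t :=
      RL.hasFDerivAt.comp_hasDerivAt t hg
    rw [clm_apply] at hRg
    have hlin : HasDerivAt (fun s : ℝ => s • RL (Matrix.toEuclideanLin (H x) d))
        ((1:ℝ) • RL (Matrix.toEuclideanLin (H x) d)) t :=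
      (hasDerivAt_id t).smul_const _
    rw [one_smul] at hlin
    exact hRg.sub hlin
  have hψbound : ∀ s t : ℝ, ‖ψ t - ψ s‖ ≤ ξ * L * ‖d‖^2 * |t - s| := by
    intro s t
    have h1 : ψ t - ψ s = RL (Matrix.toEuclideanLin (H (c t)) d
        - Matrix.toEuclideanLin (H (c s)) d) := by
      rw [map_sub]; simp [hψ]
    rw [h1, hRLapp]
    calc ‖Matrix.toEuclideanLin R _‖ ≤ ξ * ‖Matrix.toEuclideanLin (H (c t)) d
          - Matrix.toEuclideanLin (H (c s)) d‖ := hRb _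
    _ ≤ ξ * (L * ‖c t - c s‖ * ‖d‖) := by
        have := hLip (c t) (c s) d
        exact mul_le_mul_of_nonneg_left this hξ
    _ = ξ * L * ‖d‖^2 * |t - s| := by
        have hcts : c t - c s = (t - s) • d := by
          simp [hc, sub_smul]
        rw [hcts, norm_smul, Real.norm_eq_abs]; ring
  have hψlip : LipschitzWith (Real.toNNReal (ξ * L * ‖d‖^2)) ψ := by
    refine LipschitzWith.of_dist_le_mul fun t s => ?_
    rw [dist_eq_norm, dist_eq_norm]
    calc ‖ψ t - ψ s‖ ≤ ξ * L * ‖d‖^2 * |t - s| := hψbound s t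
    _ ≤ Real.toNNReal (ξ * L * ‖d‖^2) * ‖t - s‖ := by
        rw [Real.norm_eq_abs]
        exact mul_le_mul_of_nonneg_right (Real.le_coe_toNNReal _) (abs_nonneg _)
  have hψcont : Continuous ψ := hψlip.continuous
  have hftc : ∫ t in (0:ℝ)..1, ψ t = φ 1 - φ 0 :=
    integral_eq_sub_of_hasDerivAt (fun t _ => hderiv t)
      (hψcont.intervalIntegrable 0 1)
  have hφ1 : φ 1 - φ 0 = Matrix.toEuclideanLin R (g (x + d)) - Matrix.toEuclideanLin R (g x)
      - Matrix.toEuclideanLin R (Matrix.toEuclideanLin (H x) d) := by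
    simp [hφ, hc, hRLapp]
    abel
  have hbound : ‖∫ t in (0:ℝ)..1, ψ t‖ ≤ |∫ t in (0:ℝ)..1, ξ * L * ‖d‖^2 * t| := by
    refine norm_integral_le_abs_of_norm_le ?_ ?_
    · refine (MeasureTheory.ae_restrict_iff' measurableSet_uIoc).mpr ?_
      refine MeasureTheory.ae_of_all _ fun t ht => ?_
      have ht' : 0 < t ∧ t ≤ 1 := by
        rw [Set.uIoc_of_le (by norm_num : (0:ℝ) ≤ 1)] at ht
        exact ⟨ht.1, ht.2⟩
      have := hψbound 0 t
      have hψ0 : ψ 0 = 0 := by simp [hψ, hc]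
      rw [hψ0, sub_zero, sub_zero] at this
      calc ‖ψ t‖ ≤ ξ * L * ‖d‖^2 * |t| := this
      _ = ξ * L * ‖d‖^2 * t := by rw [abs_of_pos ht'.1]
    · exact (continuous_const.mul continuous_id).intervalIntegrable 0 1
  have hint : ∫ t in (0:ℝ)..1, ξ * L * ‖d‖^2 * t = ξ * L * ‖d‖^2 / 2 := by
    rw [integral_const_mul, integral_id]
    ring
  rw [hftc, hφ1, hint] at hbound
  exact hbound.trans (le_of_eq (abs_of_nonneg (by positivity)))

end Helpers

open RealInnerProductSpace in
/-- One coarse step of the multilevel Newton method contracts the reduced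
gradient quadratically: `‖R∇f(x⁺)‖ ≤ (Lξ³/(2μ²ω⁴)) ‖R∇f(x)‖²`. -/
theorem norm_reduced_grad_coarse_step_le
    {n p : ℕ} (hp : p ≤ n)
    (f : EuclideanSpace ℝ (Fin n) → ℝ)
    (hf : ContDiff ℝ 2 f)
    (Hess : EuclideanSpace ℝ (Fin n) → Matrix (Fin n) (Fin n) ℝ)
    (hHess : ∀ y, HasFDerivAt (gradient f) (Matrix.toEuclideanCLM (𝕜 := ℝ) (Hess y)) y)
    (μ L : ℝ) (hμ : 0 < μ) (hL : 0 < L)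
    (hsc : ∀ y, (Hess y - μ • (1 : Matrix (Fin n) (Fin n) ℝ)).PosSemidef)
    (hLip : ∀ y z, Matrix.specNorm (Hess y - Hess z) ≤ L * ‖y - z‖)
    (R : Matrix (Fin p) (Fin n) ℝ) (hR : R.rank = p)
    (ω ξ : ℝ) (hω : 0 < ω) (hωξ : ω ≤ ξ)
    (hsv : ∀ i, R.singularValueT i ∈ Set.Icc ω ξ)
    (x xp : EuclideanSpace ℝ (Fin n))
    (hxp : xp = x - Matrix.toEuclideanLin (Rᵀ * (R * Hess x * Rᵀ)⁻¹ * R) (gradient f x)) :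
    ‖Matrix.toEuclideanLin R (gradient f xp)‖ ≤
      L * ξ ^ 3 / (2 * μ ^ 2 * ω ^ 4) * ‖Matrix.toEuclideanLin R (gradient f x)‖ ^ 2 := by
  have hξ : 0 < ξ := lt_of_lt_of_le hω hωξ
  set g := gradient f with hg
  set A : Matrix (Fin p) (Fin p) ℝ := R * Hess x * Rᵀ with hA
  -- operator norm bounds from singular values
  have hRt : ∀ v : EuclideanSpace ℝ (Fin p), ‖Matrix.toEuclideanLin Rᵀ v‖ ≤ ξ * ‖v‖ :=
    fun v => (Rt_bounds R hω.le hξ.le hsv v).2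
  have hRtl : ∀ v : EuclideanSpace ℝ (Fin p), ω * ‖v‖ ≤ ‖Matrix.toEuclideanLin Rᵀ v‖ :=
    fun v => (Rt_bounds R hω.le hξ.le hsv v).1
  have hRb : ∀ w, ‖Matrix.toEuclideanLin R w‖ ≤ ξ * ‖w‖ := R_bound R hξ.le hRt
  -- quadratic lower bound for A
  have hquad : ∀ v : EuclideanSpace ℝ (Fin p),
      μ * ω^2 * ‖v‖^2 ≤ ⟪v, Matrix.toEuclideanLin A v⟫ := by
    intro v
    have h1 : ⟪v, Matrix.toEuclideanLin A v⟫
        = ⟪Matrix.toEuclideanLin Rᵀ v,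
            Matrix.toEuclideanLin (Hess x) (Matrix.toEuclideanLin Rᵀ v)⟫ := by
      rw [hA, tel_mul, tel_mul, real_inner_comm, inner_tel, real_inner_comm]
    have h2 := sc_bound (hsc x) (Matrix.toEuclideanLin Rᵀ v)
    have h3 := hRtl v
    have h4 : (ω * ‖v‖)^2 ≤ ‖Matrix.toEuclideanLin Rᵀ v‖^2 :=
      pow_le_pow_left₀ (mul_nonneg hω.le (norm_nonneg v)) h3 2
    have h5 := mul_le_mul_of_nonneg_left h4 hμ.le
    rw [h1]
    nlinarith [h2, h5]
  obtain ⟨hmul, hAinv⟩ := inv_facts (by positivity : (0:ℝ) < μ * ω^2) hquad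
  -- the step
  set D : EuclideanSpace ℝ (Fin n) :=
    Matrix.toEuclideanLin (Rᵀ * A⁻¹ * R) (g x) with hD
  have hxpD : xp = x + -D := by rw [hxp, sub_eq_add_neg]
  set G : ℝ := ‖Matrix.toEuclideanLin R (g x)‖ with hG
  have hDnorm : ‖D‖ ≤ ξ * ((μ * ω^2)⁻¹ * G) := by
    have h1 : ‖D‖ = ‖Matrix.toEuclideanLin Rᵀ (Matrix.toEuclideanLin A⁻¹
        (Matrix.toEuclideanLin R (g x)))‖ := by rw [hD, tel_mul, tel_mul]
    rw [h1]
    refine (hRt _).trans ?_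
    exact mul_le_mul_of_nonneg_left (hAinv _) hξ.le
  -- key Newton identity
  have hmat : R * Hess x * (Rᵀ * A⁻¹ * R) = R := by
    rw [← Matrix.mul_assoc, ← Matrix.mul_assoc, ← hA, hmul, Matrix.one_mul]
  have hkey : Matrix.toEuclideanLin R (Matrix.toEuclideanLin (Hess x) D)
      = Matrix.toEuclideanLin R (g x) := by
    calc Matrix.toEuclideanLin R (Matrix.toEuclideanLin (Hess x) D)
        = Matrix.toEuclideanLin (R * Hess x) D := (tel_mul _ _ _).symm
      _ = Matrix.toEuclideanLin (R * Hess x * (Rᵀ * A⁻¹ * R)) (g x) := by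
          rw [hD, ← tel_mul]
      _ = Matrix.toEuclideanLin R (g x) := by rw [hmat]
  -- Lipschitz bound in applied form
  have hLip' : ∀ y z v, ‖Matrix.toEuclideanLin (Hess y) v - Matrix.toEuclideanLin (Hess z) v‖
      ≤ L * ‖y - z‖ * ‖v‖ := by
    intro y z v
    have h1 : Matrix.toEuclideanLin (Hess y) v - Matrix.toEuclideanLin (Hess z) v
        = Matrix.toEuclideanLin (Hess y - Hess z) v := by
      rw [map_sub]; rfl
    rw [h1]
    have h2 : ‖Matrix.toEuclideanLin (Hess y - Hess z) v‖
        ≤ Matrix.specNorm (Hess y - Hess z) * ‖v‖ :=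
      (LinearMap.toContinuousLinearMap (Matrix.toEuclideanLin (Hess y - Hess z))).le_opNorm v
    exact h2.trans (mul_le_mul_of_nonneg_right (hLip y z) (norm_nonneg v))
  have htay := taylor_step R g Hess hHess hL.le hξ.le hLip' hRb x (-D)
  rw [← hxpD] at htay
  have hHD : Matrix.toEuclideanLin R (Matrix.toEuclideanLin (Hess x) (-D))
      = -(Matrix.toEuclideanLin R (g x)) := by
    rw [map_neg, map_neg, hkey]
  rw [hHD] at htay
  have hsimp : Matrix.toEuclideanLin R (g xp) - Matrix.toEuclideanLin R (g x)
      - -(Matrix.toEuclideanLin R (g x)) = Matrix.toEuclideanLin R (g xp) := by abel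
  rw [hsimp, norm_neg] at htay
  -- final arithmetic
  have hDsq : ‖D‖^2 ≤ (ξ * ((μ * ω^2)⁻¹ * G))^2 :=
    pow_le_pow_left₀ (norm_nonneg D) hDnorm 2
  have hfinal : ξ * L * ‖D‖^2 / 2 ≤ L * ξ ^ 3 / (2 * μ ^ 2 * ω ^ 4) * G^2 := by
    have heq : ξ * L * (ξ * ((μ * ω^2)⁻¹ * G))^2 / 2
        = L * ξ ^ 3 / (2 * μ ^ 2 * ω ^ 4) * G^2 := by
      field_simp
    rw [← heq]
    have : ξ * L * ‖D‖^2 ≤ ξ * L * (ξ * ((μ * ω^2)⁻¹ * G))^2 :=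
      mul_le_mul_of_nonneg_left hDsq (by positivity)
    linarith
  exact htay.trans hfinal

end
end

section
/- Let f : ℝⁿ → ℝ be twice continuously differentiable, μ-strongly convex with μ > 0, and with L-Lipschitz Hessian, L > 0. Let R ∈ ℝ^{p×n} have full row rank p ≤ n, P := Rᵀ, and suppose all singular values of P lie in [ω, ξ] with 0 < ω ≤ ξ. If x⁺ := x − P(R∇²f(x)P)⁻¹R∇f(x) is the coarse step at x ∈ ℝⁿ, then ‖R∇f(x⁺)‖ ≤ (Lξ⁵/(2μ²ω⁴)) ‖∇f(x)‖². -/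
open Matrix RealInnerProductSpace

noncomputable section

namespace CoarseAux

lemma specNorm_bound {m n : ℕ} (A : Matrix (Fin m) (Fin n) ℝ) (v : EuclideanSpace ℝ (Fin n)) :
    ‖Matrix.toEuclideanLin A v‖ ≤ A.specNorm * ‖v‖ := by
  have := (LinearMap.toContinuousLinearMap (Matrix.toEuclideanLin A)).le_opNorm v
  simpa [Matrix.specNorm] using this

lemma inner_TL {m n : ℕ} (A : Matrix (Fin m) (Fin n) ℝ) (x : EuclideanSpace ℝ (Fin n))
    (y : EuclideanSpace ℝ (Fin m)) :
    ⟪Matrix.toEuclideanLin A x, y⟫ = ⟪x, Matrix.toEuclideanLin Aᵀ y⟫ := by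
  have h : Aᵀ = Aᴴ := by ext i j; simp [Matrix.conjTranspose]
  rw [h, Matrix.toEuclideanLin_conjTranspose_eq_adjoint, LinearMap.adjoint_inner_right]

lemma inner_TL' {m n : ℕ} (A : Matrix (Fin m) (Fin n) ℝ) (x : EuclideanSpace ℝ (Fin m))
    (y : EuclideanSpace ℝ (Fin n)) :
    ⟪x, Matrix.toEuclideanLin A y⟫ = ⟪Matrix.toEuclideanLin Aᵀ x, y⟫ := by
  rw [real_inner_comm, inner_TL, real_inner_comm]

lemma TL_mul {m n k : ℕ} (A : Matrix (Fin m) (Fin n) ℝ) (B : Matrix (Fin n) (Fin k) ℝ)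
    (v : EuclideanSpace ℝ (Fin k)) :
    Matrix.toEuclideanLin (A * B) v = Matrix.toEuclideanLin A (Matrix.toEuclideanLin B v) := by
  simp [Matrix.toEuclideanLin_apply, Matrix.mulVec_mulVec]

lemma psd_inner {n : ℕ} {A : Matrix (Fin n) (Fin n) ℝ} (hA : A.PosSemidef)
    (v : EuclideanSpace ℝ (Fin n)) : 0 ≤ ⟪v, Matrix.toEuclideanLin A v⟫ := by
  have := hA.dotProduct_mulVec_nonneg ((WithLp.equiv 2 _) v)
  simpa [Matrix.toEuclideanLin_apply, PiLp.inner_apply, dotProduct, mul_comm] using this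

lemma herm_sub_smul_psd {n : ℕ} {A : Matrix (Fin n) (Fin n) ℝ} (hA : A.IsHermitian) {c : ℝ}
    (h : ∀ i, c ≤ hA.eigenvalues i) : (A - c • 1).PosSemidef := by
  have hU : (hA.eigenvectorUnitary : Matrix (Fin n) (Fin n) ℝ) *
      star (hA.eigenvectorUnitary : Matrix (Fin n) (Fin n) ℝ) = 1 :=
    Matrix.mem_unitaryGroup_iff.mp hA.eigenvectorUnitary.2
  have hdiag : Matrix.diagonal (RCLike.ofReal ∘ hA.eigenvalues) - c • (1 : Matrix (Fin n) (Fin n) ℝ)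
      = Matrix.diagonal (fun i => hA.eigenvalues i - c) := by
    ext i j
    by_cases hij : i = j <;> simp [Matrix.diagonal, hij, Matrix.one_apply]
  have key : A - c • 1 = (hA.eigenvectorUnitary : Matrix (Fin n) (Fin n) ℝ) *
      Matrix.diagonal (fun i => hA.eigenvalues i - c) *
      star (hA.eigenvectorUnitary : Matrix (Fin n) (Fin n) ℝ) := by
    have h1 : (c • (1 : Matrix (Fin n) (Fin n) ℝ)) =
        (hA.eigenvectorUnitary : Matrix (Fin n) (Fin n) ℝ) * (c • 1) *
        star (hA.eigenvectorUnitary : Matrix (Fin n) (Fin n) ℝ) := by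
      rw [Matrix.mul_smul, mul_one, Matrix.smul_mul, hU]
    rw [← hdiag, Matrix.mul_sub, Matrix.sub_mul, ← h1]
    conv_lhs => rw [hA.spectral_theorem, Unitary.conjStarAlgAut_apply]
  rw [key, Matrix.star_eq_conjTranspose]
  exact (Matrix.posSemidef_diagonal_iff.mpr (fun i => by simp [h i])).mul_mul_conjTranspose_same _

lemma herm_smul_sub_psd {n : ℕ} {A : Matrix (Fin n) (Fin n) ℝ} (hA : A.IsHermitian) {c : ℝ}
    (h : ∀ i, hA.eigenvalues i ≤ c) : (c • 1 - A).PosSemidef := by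
  have hU : (hA.eigenvectorUnitary : Matrix (Fin n) (Fin n) ℝ) *
      star (hA.eigenvectorUnitary : Matrix (Fin n) (Fin n) ℝ) = 1 :=
    Matrix.mem_unitaryGroup_iff.mp hA.eigenvectorUnitary.2
  have hdiag : c • (1 : Matrix (Fin n) (Fin n) ℝ) - Matrix.diagonal (RCLike.ofReal ∘ hA.eigenvalues)
      = Matrix.diagonal (fun i => c - hA.eigenvalues i) := by
    ext i j
    by_cases hij : i = j <;> simp [Matrix.diagonal, hij, Matrix.one_apply]
  have key : c • 1 - A = (hA.eigenvectorUnitary : Matrix (Fin n) (Fin n) ℝ) *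
      Matrix.diagonal (fun i => c - hA.eigenvalues i) *
      star (hA.eigenvectorUnitary : Matrix (Fin n) (Fin n) ℝ) := by
    have h1 : (c • (1 : Matrix (Fin n) (Fin n) ℝ)) =
        (hA.eigenvectorUnitary : Matrix (Fin n) (Fin n) ℝ) * (c • 1) *
        star (hA.eigenvectorUnitary : Matrix (Fin n) (Fin n) ℝ) := by
      rw [Matrix.mul_smul, mul_one, Matrix.smul_mul, hU]
    rw [← hdiag, Matrix.mul_sub, Matrix.sub_mul, ← h1]
    conv_lhs => rw [hA.spectral_theorem, Unitary.conjStarAlgAut_apply]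
  rw [key, Matrix.star_eq_conjTranspose]
  exact (Matrix.posSemidef_diagonal_iff.mpr (fun i => by simp [h i])).mul_mul_conjTranspose_same _

lemma quad_ge {n : ℕ} {A : Matrix (Fin n) (Fin n) ℝ} {c : ℝ} (h : (A - c • 1).PosSemidef)
    (v : EuclideanSpace ℝ (Fin n)) : c * ‖v‖ ^ 2 ≤ ⟪v, Matrix.toEuclideanLin A v⟫ := by
  have h0 := psd_inner h v
  have e1 : Matrix.toEuclideanLin (A - c • (1 : Matrix (Fin n) (Fin n) ℝ)) v
      = Matrix.toEuclideanLin A v - c • v := by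
    rw [map_sub]
    simp [Matrix.toEuclideanLin_apply, Matrix.smul_mulVec]
  rw [e1, inner_sub_right, real_inner_smul_right, real_inner_self_eq_norm_sq] at h0
  linarith

lemma quad_le {n : ℕ} {A : Matrix (Fin n) (Fin n) ℝ} {c : ℝ} (h : (c • 1 - A).PosSemidef)
    (v : EuclideanSpace ℝ (Fin n)) : ⟪v, Matrix.toEuclideanLin A v⟫ ≤ c * ‖v‖ ^ 2 := by
  have h0 := psd_inner h v
  have e1 : Matrix.toEuclideanLin (c • (1 : Matrix (Fin n) (Fin n) ℝ) - A) v
      = c • v - Matrix.toEuclideanLin A v := by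
    rw [map_sub]
    simp [Matrix.toEuclideanLin_apply, Matrix.smul_mulVec]
  rw [e1, inner_sub_right, real_inner_smul_right, real_inner_self_eq_norm_sq] at h0
  linarith

section SV

variable {p n : ℕ} (R : Matrix (Fin p) (Fin n) ℝ) {ω ξ : ℝ}

lemma quad_RRT (v : EuclideanSpace ℝ (Fin p)) :
    ⟪v, Matrix.toEuclideanLin (R * Rᵀ) v⟫ = ‖Matrix.toEuclideanLin Rᵀ v‖ ^ 2 := by
  rw [TL_mul, inner_TL', real_inner_self_eq_norm_sq]

lemma ev_bounds (hω : 0 < ω) (hsv : ∀ i, R.singularValueT i ∈ Set.Icc ω ξ) (i : Fin p) :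
    ω ^ 2 ≤ (Matrix.isHermitian_mul_conjTranspose_self R).eigenvalues i ∧
    (Matrix.isHermitian_mul_conjTranspose_self R).eigenvalues i ≤ ξ ^ 2 := by
  have hnn := Matrix.eigenvalues_self_mul_conjTranspose_nonneg R i
  obtain ⟨h1, h2⟩ := hsv i
  have hsq : Real.sqrt ((Matrix.isHermitian_mul_conjTranspose_self R).eigenvalues i) ^ 2
      = (Matrix.isHermitian_mul_conjTranspose_self R).eigenvalues i := Real.sq_sqrt hnn
  unfold Matrix.singularValueT at h1 h2
  constructor <;> nlinarith [Real.sqrt_nonneg ((Matrix.isHermitian_mul_conjTranspose_self R).eigenvalues i)]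

lemma RRT_herm_T : Rᴴ = Rᵀ := by ext i j; simp [Matrix.conjTranspose]

lemma lowRT (hω : 0 < ω) (hsv : ∀ i, R.singularValueT i ∈ Set.Icc ω ξ)
    (v : EuclideanSpace ℝ (Fin p)) : ω * ‖v‖ ≤ ‖Matrix.toEuclideanLin Rᵀ v‖ := by
  have hpsd : (R * Rᵀ - ω ^ 2 • 1).PosSemidef := by
    rw [← RRT_herm_T R]
    exact herm_sub_smul_psd _ (fun i => (ev_bounds R hω hsv i).1)
  have := (quad_ge hpsd v).trans_eq (quad_RRT R v)
  nlinarith [norm_nonneg v, norm_nonneg (Matrix.toEuclideanLin Rᵀ v), hω.le]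

lemma upRT (hω : 0 < ω) (hξ : 0 ≤ ξ) (hsv : ∀ i, R.singularValueT i ∈ Set.Icc ω ξ)
    (v : EuclideanSpace ℝ (Fin p)) : ‖Matrix.toEuclideanLin Rᵀ v‖ ≤ ξ * ‖v‖ := by
  have hpsd : (ξ ^ 2 • 1 - R * Rᵀ).PosSemidef := by
    rw [← RRT_herm_T R]
    exact herm_smul_sub_psd _ (fun i => (ev_bounds R hω hsv i).2)
  have := (quad_RRT R v).symm.trans_le (quad_le hpsd v)
  nlinarith [norm_nonneg v, norm_nonneg (Matrix.toEuclideanLin Rᵀ v), mul_nonneg hξ (norm_nonneg v)]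

lemma upR (hω : 0 < ω) (hξ : 0 ≤ ξ) (hsv : ∀ i, R.singularValueT i ∈ Set.Icc ω ξ)
    (w : EuclideanSpace ℝ (Fin n)) : ‖Matrix.toEuclideanLin R w‖ ≤ ξ * ‖w‖ := by
  set u := Matrix.toEuclideanLin R w with hu
  have h1 : ‖u‖ ^ 2 = ⟪w, Matrix.toEuclideanLin Rᵀ u⟫ := by
    rw [← inner_TL, ← hu, real_inner_self_eq_norm_sq]
  have h2 : ⟪w, Matrix.toEuclideanLin Rᵀ u⟫ ≤ ‖w‖ * ‖Matrix.toEuclideanLin Rᵀ u‖ :=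
    real_inner_le_norm _ _
  have h3 : ‖Matrix.toEuclideanLin Rᵀ u‖ ≤ ξ * ‖u‖ := upRT R hω hξ hsv u
  rcases eq_or_lt_of_le (norm_nonneg u) with h | h
  · rw [← h]; positivity
  · have : ‖u‖ ^ 2 ≤ ‖w‖ * (ξ * ‖u‖) := by nlinarith [norm_nonneg w]
    nlinarith

end SV

section Q
variable {n p : ℕ} {H : Matrix (Fin n) (Fin n) ℝ} {R : Matrix (Fin p) (Fin n) ℝ} {μ c : ℝ}

lemma quad_Q (hq : ∀ w : EuclideanSpace ℝ (Fin n), μ * ‖w‖ ^ 2 ≤ ⟪w, Matrix.toEuclideanLin H w⟫)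
    (hlow : ∀ v : EuclideanSpace ℝ (Fin p), c * ‖v‖ ≤ ‖Matrix.toEuclideanLin Rᵀ v‖)
    (hμ : 0 < μ) (hc : 0 ≤ c) (v : EuclideanSpace ℝ (Fin p)) :
    μ * c ^ 2 * ‖v‖ ^ 2 ≤ ⟪v, Matrix.toEuclideanLin (R * H * Rᵀ) v⟫ := by
  have e : ⟪v, Matrix.toEuclideanLin (R * H * Rᵀ) v⟫
      = ⟪Matrix.toEuclideanLin Rᵀ v, Matrix.toEuclideanLin H (Matrix.toEuclideanLin Rᵀ v)⟫ := by
    rw [Matrix.mul_assoc, TL_mul, inner_TL', TL_mul]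
  rw [e]
  have h1 := hq (Matrix.toEuclideanLin Rᵀ v)
  have h2 := hlow v
  have h3 : (c * ‖v‖) ^ 2 ≤ ‖Matrix.toEuclideanLin Rᵀ v‖ ^ 2 := by
    have := mul_le_mul h2 h2 (by positivity) (norm_nonneg _)
    nlinarith
  nlinarith [mul_le_mul_of_nonneg_left h3 hμ.le]

lemma dot_eq_inner {k : ℕ} (Q : Matrix (Fin k) (Fin k) ℝ) (v : Fin k → ℝ) :
    star v ⬝ᵥ (Q *ᵥ v) =
      ⟪(WithLp.equiv 2 (Fin k → ℝ)).symm v,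
        Matrix.toEuclideanLin Q ((WithLp.equiv 2 (Fin k → ℝ)).symm v)⟫ := by
  simp [Matrix.toEuclideanLin_apply, PiLp.inner_apply, dotProduct, mul_comm]

lemma Q_posdef (hH : H.IsHermitian)
    (hquad : ∀ v : EuclideanSpace ℝ (Fin p), μ * c ^ 2 * ‖v‖ ^ 2 ≤
      ⟪v, Matrix.toEuclideanLin (R * H * Rᵀ) v⟫)
    (hμ : 0 < μ) (hc : 0 < c) : (R * H * Rᵀ).PosDef := by
  refine Matrix.PosDef.of_dotProduct_mulVec_pos ?_ ?_
  · have : (R * H * Rᵀ)ᴴ = R * H * Rᵀ := by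
      have hRT : Rᵀᴴ = Rᴴᵀ := by ext i j; simp [Matrix.conjTranspose]
      rw [Matrix.conjTranspose_mul, Matrix.conjTranspose_mul, hH.eq, hRT]
      have : Rᴴ = Rᵀ := by ext i j; simp [Matrix.conjTranspose]
      rw [this, Matrix.transpose_transpose, Matrix.mul_assoc]
    exact this
  · intro v hv
    have hv' : (WithLp.equiv 2 (Fin p → ℝ)).symm v ≠ 0 :=
      fun h0 => hv (by simpa using congrArg (WithLp.equiv 2 (Fin p → ℝ)) h0)
    have hn : 0 < ‖(WithLp.equiv 2 (Fin p → ℝ)).symm v‖ := norm_pos_iff.mpr hv'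
    have := hquad ((WithLp.equiv 2 (Fin p → ℝ)).symm v)
    rw [← dot_eq_inner] at this
    nlinarith [mul_pos (mul_pos hμ (pow_pos hc 2)) (pow_pos hn 2)]
end Q

lemma CLM_apply {k : ℕ} (A : Matrix (Fin k) (Fin k) ℝ) (v : EuclideanSpace ℝ (Fin k)) :
    Matrix.toEuclideanCLM (𝕜 := ℝ) A v = Matrix.toEuclideanLin A v := by
  have := Matrix.coe_toEuclideanCLM_eq_toEuclideanLin (𝕜 := ℝ) (A := A)
  exact DFunLike.congr_fun this v

lemma Qinv_bound {k : ℕ} {Q : Matrix (Fin k) (Fin k) ℝ} (hQ : Q.PosDef) {a : ℝ} (ha : 0 < a)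
    (hquad : ∀ v : EuclideanSpace ℝ (Fin k), a * ‖v‖ ^ 2 ≤ ⟪v, Matrix.toEuclideanLin Q v⟫)
    (u : EuclideanSpace ℝ (Fin k)) :
    ‖Matrix.toEuclideanLin Q⁻¹ u‖ ≤ a⁻¹ * ‖u‖ := by
  have hdet : IsUnit Q.det := isUnit_iff_ne_zero.mpr (ne_of_gt hQ.det_pos)
  set w := Matrix.toEuclideanLin Q⁻¹ u with hw
  have hQw : Matrix.toEuclideanLin Q w = u := by
    rw [hw, ← TL_mul, Matrix.mul_nonsing_inv Q hdet]
    simp [Matrix.toEuclideanLin_apply, Matrix.one_mulVec]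
  have h1 : a * ‖w‖ ^ 2 ≤ ⟪w, u⟫ := hQw ▸ hquad w
  have h2 : ⟪w, u⟫ ≤ ‖w‖ * ‖u‖ := real_inner_le_norm _ _
  rcases eq_or_lt_of_le (norm_nonneg w) with h | h
  · rw [← h]; positivity
  · rw [← mul_le_mul_iff_right₀ ha, ← mul_le_mul_iff_right₀ h]
    calc ‖w‖ * (a * ‖w‖) = a * ‖w‖ ^ 2 := by ring
    _ ≤ ⟪w, u⟫ := h1
    _ ≤ ‖w‖ * ‖u‖ := h2
    _ = ‖w‖ * (a * (a⁻¹ * ‖u‖)) := by field_simp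

lemma taylor_bound {n : ℕ} (f : EuclideanSpace ℝ (Fin n) → ℝ)
    (Hess : EuclideanSpace ℝ (Fin n) → Matrix (Fin n) (Fin n) ℝ)
    (hHess : ∀ y, HasFDerivAt (gradient f) (Matrix.toEuclideanCLM (𝕜 := ℝ) (Hess y)) y)
    {L : ℝ}
    (hLip : ∀ y z, Matrix.specNorm (Hess y - Hess z) ≤ L * ‖y - z‖)
    (x d : EuclideanSpace ℝ (Fin n)) :
    ‖gradient f (x + d) - gradient f x - Matrix.toEuclideanLin (Hess x) d‖
      ≤ L / 2 * ‖d‖ ^ 2 := by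
  set γ : ℝ → EuclideanSpace ℝ (Fin n) := fun t => x + t • d with hγdef
  have hγ : ∀ t : ℝ, HasDerivAt γ d t := by
    intro t
    simpa only [id_eq, one_smul] using ((hasDerivAt_id t).smul_const d).const_add x
  set ψ : ℝ → EuclideanSpace ℝ (Fin n) :=
    fun t => Matrix.toEuclideanLin (Hess (γ t) - Hess x) d with hψdef
  have hψ_eq : ∀ t, ψ t = Matrix.toEuclideanLin (Hess (γ t)) d
      - Matrix.toEuclideanLin (Hess x) d := by
    intro t; rw [hψdef]; simp [map_sub]
  set φ : ℝ → EuclideanSpace ℝ (Fin n) :=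
    fun t => gradient f (γ t) - t • (Matrix.toEuclideanLin (Hess x) d) with hφdef
  have hφ : ∀ t : ℝ, HasDerivAt φ (ψ t) t := by
    intro t
    have h1 : HasDerivAt (fun s => gradient f (γ s))
        (Matrix.toEuclideanCLM (𝕜 := ℝ) (Hess (γ t)) d) t :=
      (hHess (γ t)).comp_hasDerivAt t (hγ t)
    have h2 : HasDerivAt (fun s : ℝ => s • (Matrix.toEuclideanLin (Hess x) d))
        (Matrix.toEuclideanLin (Hess x) d) t := by
      simpa using (hasDerivAt_id t).smul_const (Matrix.toEuclideanLin (Hess x) d)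
    have h3 := h1.sub h2
    rw [CLM_apply] at h3
    rw [hψ_eq]
    exact h3
  have hγsub : ∀ s t : ℝ, γ s - γ t = (s - t) • d := by
    intro s t; rw [hγdef]; simp [sub_smul]
  have hψcont : Continuous ψ := by
    apply LipschitzWith.continuous (K := Real.toNNReal (L * ‖d‖ ^ 2))
    apply LipschitzWith.of_dist_le_mul
    intro s t
    rw [dist_eq_norm, dist_eq_norm]
    have e : ψ s - ψ t = Matrix.toEuclideanLin (Hess (γ s) - Hess (γ t)) d := by
      rw [hψ_eq, hψ_eq]; simp [map_sub]
    rw [e]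
    calc ‖Matrix.toEuclideanLin (Hess (γ s) - Hess (γ t)) d‖
        ≤ Matrix.specNorm (Hess (γ s) - Hess (γ t)) * ‖d‖ := specNorm_bound _ _
      _ ≤ (L * ‖γ s - γ t‖) * ‖d‖ := by
          apply mul_le_mul_of_nonneg_right (hLip _ _) (norm_nonneg d)
      _ = (L * ‖d‖ ^ 2) * ‖s - t‖ := by
          rw [hγsub, norm_smul]; simp [Real.norm_eq_abs]; ring
      _ ≤ (Real.toNNReal (L * ‖d‖ ^ 2) : ℝ) * ‖s - t‖ := by
          apply mul_le_mul_of_nonneg_right _ (norm_nonneg _)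
          exact Real.le_coe_toNNReal _
  have hψbound : ∀ t ∈ Set.Icc (0:ℝ) 1, ‖ψ t‖ ≤ (L * ‖d‖ ^ 2) * t := by
    rintro t ⟨ht0, ht1⟩
    calc ‖ψ t‖ ≤ Matrix.specNorm (Hess (γ t) - Hess x) * ‖d‖ := specNorm_bound _ _
      _ ≤ (L * ‖γ t - x‖) * ‖d‖ := mul_le_mul_of_nonneg_right (hLip _ _) (norm_nonneg d)
      _ = (L * ‖d‖ ^ 2) * t := by
          have : γ t - x = t • d := by rw [hγdef]; simp
          rw [this, norm_smul]
          simp [Real.norm_eq_abs, abs_of_nonneg ht0]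
          ring
  have hint : ∫ t in (0:ℝ)..1, ψ t = φ 1 - φ 0 :=
    intervalIntegral.integral_eq_sub_of_hasDerivAt (fun t _ => hφ t)
      (hψcont.intervalIntegrable 0 1)
  have hφ10 : φ 1 - φ 0 = gradient f (x + d) - gradient f x - Matrix.toEuclideanLin (Hess x) d := by
    rw [hφdef]; simp [hγdef]; abel
  rw [← hφ10, ← hint]
  calc ‖∫ t in (0:ℝ)..1, ψ t‖ ≤ ∫ t in (0:ℝ)..1, ‖ψ t‖ :=
        intervalIntegral.norm_integral_le_integral_norm zero_le_one
    _ ≤ ∫ t in (0:ℝ)..1, (L * ‖d‖ ^ 2) * t := by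
        apply intervalIntegral.integral_mono_on zero_le_one
        · exact (hψcont.norm).intervalIntegrable 0 1
        · exact (continuous_const.mul continuous_id).intervalIntegrable 0 1
        · exact hψbound
    _ = (L * ‖d‖ ^ 2) * (1 / 2) := by
        rw [intervalIntegral.integral_const_mul]
        simp [integral_id]
    _ = L / 2 * ‖d‖ ^ 2 := by ring

end CoarseAux

open CoarseAux in
/-- One coarse step of the multilevel Newton method satisfies
`‖R∇f(x⁺)‖ ≤ (Lξ⁵/(2μ²ω⁴)) ‖∇f(x)‖²`. -/
theorem norm_reduced_grad_coarse_step_le_sq_grad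
    {n p : ℕ} (hp : p ≤ n)
    (f : EuclideanSpace ℝ (Fin n) → ℝ)
    (hf : ContDiff ℝ 2 f)
    (Hess : EuclideanSpace ℝ (Fin n) → Matrix (Fin n) (Fin n) ℝ)
    (hHess : ∀ y, HasFDerivAt (gradient f) (Matrix.toEuclideanCLM (𝕜 := ℝ) (Hess y)) y)
    (μ L : ℝ) (hμ : 0 < μ) (hL : 0 < L)
    (hsc : ∀ y, (Hess y - μ • (1 : Matrix (Fin n) (Fin n) ℝ)).PosSemidef)
    (hLip : ∀ y z, Matrix.specNorm (Hess y - Hess z) ≤ L * ‖y - z‖)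
    (R : Matrix (Fin p) (Fin n) ℝ) (hR : R.rank = p)
    (ω ξ : ℝ) (hω : 0 < ω) (hωξ : ω ≤ ξ)
    (hsv : ∀ i, R.singularValueT i ∈ Set.Icc ω ξ)
    (x xp : EuclideanSpace ℝ (Fin n))
    (hxp : xp = x - Matrix.toEuclideanLin (Rᵀ * (R * Hess x * Rᵀ)⁻¹ * R) (gradient f x)) :
    ‖Matrix.toEuclideanLin R (gradient f xp)‖ ≤
      L * ξ ^ 5 / (2 * μ ^ 2 * ω ^ 4) * ‖gradient f x‖ ^ 2 := by
  have hξ : 0 < ξ := hω.trans_le hωξ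
  set g := gradient f x with hg
  set H := Hess x with hH
  set Q := R * Hess x * Rᵀ with hQ
  set d : EuclideanSpace ℝ (Fin n) :=
    Matrix.toEuclideanLin Rᵀ (Matrix.toEuclideanLin Q⁻¹ (Matrix.toEuclideanLin R g)) with hd
  -- basic facts
  have hHerm : H.IsHermitian := by
    have h1 := (hsc x).1
    have h2 : (μ • (1 : Matrix (Fin n) (Fin n) ℝ)).IsHermitian := by
      unfold Matrix.IsHermitian
      ext i j
      simp [Matrix.conjTranspose_apply, Matrix.one_apply, Matrix.smul_apply]
      by_cases hij : i = j <;> simp [hij]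
      exact fun h => absurd h.symm hij
    have := h1.add h2
    simpa using this
  have hquadH : ∀ w : EuclideanSpace ℝ (Fin n), μ * ‖w‖ ^ 2 ≤ ⟪w, Matrix.toEuclideanLin H w⟫ :=
    fun w => quad_ge (hsc x) w
  have hlow := lowRT R hω hsv
  have hquadQ : ∀ v : EuclideanSpace ℝ (Fin p),
      μ * ω ^ 2 * ‖v‖ ^ 2 ≤ ⟪v, Matrix.toEuclideanLin Q v⟫ :=
    fun v => quad_Q hquadH hlow hμ hω.le v
  have hQpd : Q.PosDef := Q_posdef hHerm hquadQ hμ hω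
  have hdet : IsUnit Q.det := isUnit_iff_ne_zero.mpr (ne_of_gt hQpd.det_pos)
  have hQinv : ∀ u, ‖Matrix.toEuclideanLin Q⁻¹ u‖ ≤ (μ * ω ^ 2)⁻¹ * ‖u‖ :=
    Qinv_bound hQpd (by positivity) hquadQ
  -- the step
  have hxd : xp = x - d := by
    rw [hxp, hd, ← TL_mul, ← TL_mul, hQ, Matrix.mul_assoc]
  -- step size bound
  have hdb : ‖d‖ ≤ ξ ^ 2 * (μ * ω ^ 2)⁻¹ * ‖g‖ := by
    calc ‖d‖ ≤ ξ * ‖Matrix.toEuclideanLin Q⁻¹ (Matrix.toEuclideanLin R g)‖ :=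
          upRT R hω hξ.le hsv _
      _ ≤ ξ * ((μ * ω ^ 2)⁻¹ * ‖Matrix.toEuclideanLin R g‖) := by
          apply mul_le_mul_of_nonneg_left (hQinv _) hξ.le
      _ ≤ ξ * ((μ * ω ^ 2)⁻¹ * (ξ * ‖g‖)) := by
          apply mul_le_mul_of_nonneg_left _ hξ.le
          apply mul_le_mul_of_nonneg_left (upR R hω hξ.le hsv g) (by positivity)
      _ = ξ ^ 2 * (μ * ω ^ 2)⁻¹ * ‖g‖ := by ring
  -- cancellation: R (g + H (-d)) = 0, i.e. R H d = R g
  have hcancel : Matrix.toEuclideanLin R (Matrix.toEuclideanLin H d)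
      = Matrix.toEuclideanLin R g := by
    have hmat : R * (H * (Rᵀ * Q⁻¹)) = 1 := by
      rw [hQ, ← Matrix.mul_assoc, ← Matrix.mul_assoc, Matrix.mul_nonsing_inv _ hdet]
    calc Matrix.toEuclideanLin R (Matrix.toEuclideanLin H d)
        = Matrix.toEuclideanLin (R * (H * (Rᵀ * Q⁻¹))) (Matrix.toEuclideanLin R g) := by
          rw [hd]
          rw [TL_mul, TL_mul, TL_mul]
      _ = Matrix.toEuclideanLin R g := by
          rw [hmat]
          simp [Matrix.toEuclideanLin_apply, Matrix.one_mulVec]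
  -- Taylor
  have htay := taylor_bound f Hess hHess hLip x (-d)
  have hxpd : x + -d = xp := by rw [hxd]; abel
  rw [hxpd] at htay
  have hkey : Matrix.toEuclideanLin R (gradient f xp)
      = Matrix.toEuclideanLin R
          (gradient f xp - g - Matrix.toEuclideanLin (Hess x) (-d)) := by
    rw [map_sub, map_sub]
    rw [map_neg, map_neg, ← hH, hcancel]
    abel
  rw [hkey]
  have herr : ‖gradient f xp - g - Matrix.toEuclideanLin (Hess x) (-d)‖ ≤ L / 2 * ‖d‖ ^ 2 := by
    have : ‖(-d : EuclideanSpace ℝ (Fin n))‖ = ‖d‖ := norm_neg d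
    rw [← this]
    exact htay
  calc ‖Matrix.toEuclideanLin R (gradient f xp - g - Matrix.toEuclideanLin (Hess x) (-d))‖
      ≤ ξ * ‖gradient f xp - g - Matrix.toEuclideanLin (Hess x) (-d)‖ := upR R hω hξ.le hsv _
    _ ≤ ξ * (L / 2 * ‖d‖ ^ 2) := mul_le_mul_of_nonneg_left herr hξ.le
    _ ≤ ξ * (L / 2 * (ξ ^ 2 * (μ * ω ^ 2)⁻¹ * ‖g‖) ^ 2) := by
        apply mul_le_mul_of_nonneg_left _ hξ.le
        apply mul_le_mul_of_nonneg_left _ (by positivity)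
        have hnn : (0:ℝ) ≤ ξ ^ 2 * (μ * ω ^ 2)⁻¹ * ‖g‖ := by positivity
        nlinarith [norm_nonneg d]
    _ = L * ξ ^ 5 / (2 * μ ^ 2 * ω ^ 4) * ‖g‖ ^ 2 := by
        field_simp

end
end

section
/- Let f : ℝⁿ → ℝ be twice continuously differentiable, μ-strongly convex with μ > 0, and with L-Lipschitz Hessian, L > 0. Let σ ∈ (0,1] and 0 < ω ≤ ξ with ξ > 1. Suppose x⁺ ∈ ℝⁿ is obtained from x ∈ ℝⁿ in one of the following two ways: (a) x⁺ = x − P(R∇²f(x)P)⁻¹R∇f(x) is a coarse step for some full-row-rank R ∈ ℝ^{p×n} with P := Rᵀ whose singular values all lie in [ω, ξ], and the acceptance condition ‖R∇f(x⁺)‖ ≥ σ‖∇f(x⁺)‖ holds; or (b) x⁺ = x − ∇²f(x)⁻¹∇f(x) is the full Newton step. Then ‖∇f(x⁺)‖ ≤ (Lξ⁵/(2σμ²ω⁴)) ‖∇f(x)‖². -/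
open Matrix
open scoped Matrix.Norms.L2Operator

noncomputable section

namespace AMLAux

variable {k m n p : ℕ}

local notation "⟪" x ", " y "⟫" => @inner ℝ _ _ x y

lemma specNorm_eq (A : Matrix (Fin m) (Fin n) ℝ) : A.specNorm = ‖A‖ := rfl

lemma norm_apply_le (A : Matrix (Fin m) (Fin n) ℝ) (v : EuclideanSpace ℝ (Fin n)) :
    ‖toEuclideanLin A v‖ ≤ A.specNorm * ‖v‖ :=
  (LinearMap.toContinuousLinearMap (toEuclideanLin A)).le_opNorm v

lemma specNorm_le_of_forall {A : Matrix (Fin m) (Fin n) ℝ} {C : ℝ} (hC : 0 ≤ C)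
    (h : ∀ v, ‖toEuclideanLin A v‖ ≤ C * ‖v‖) : A.specNorm ≤ C :=
  ContinuousLinearMap.opNorm_le_bound _ hC (by simpa using h)

lemma specNorm_transpose (A : Matrix (Fin m) (Fin n) ℝ) : Aᵀ.specNorm = A.specNorm := by
  rw [specNorm_eq, specNorm_eq, ← Matrix.conjTranspose_eq_transpose_of_trivial,
    Matrix.l2_opNorm_conjTranspose]

lemma toEuclideanLin_mul_apply (A : Matrix (Fin m) (Fin n) ℝ) (B : Matrix (Fin n) (Fin k) ℝ)
    (v : EuclideanSpace ℝ (Fin k)) :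
    toEuclideanLin (A * B) v = toEuclideanLin A (toEuclideanLin B v) := by
  apply (WithLp.equiv 2 _).injective
  simp [Matrix.ofLp_toEuclideanLin_apply, Matrix.mulVec_mulVec]

lemma toEuclideanCLM_apply (A : Matrix (Fin n) (Fin n) ℝ) (v : EuclideanSpace ℝ (Fin n)) :
    Matrix.toEuclideanCLM (𝕜 := ℝ) A v = toEuclideanLin A v :=
  DFunLike.congr_fun (Matrix.coe_toEuclideanCLM_eq_toEuclideanLin A) v

lemma isHermitian_of_sub_smul_one {M : Matrix (Fin n) (Fin n) ℝ} {c : ℝ}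
    (h : (M - c • 1).PosSemidef) : M.IsHermitian := by
  have h1 := h.1
  unfold Matrix.IsHermitian at h1 ⊢
  rw [conjTranspose_sub] at h1
  have h2 : (c • (1 : Matrix (Fin n) (Fin n) ℝ))ᴴ = c • 1 := by simp
  rw [h2] at h1
  exact sub_left_inj.mp h1

lemma quad_ge {M : Matrix (Fin n) (Fin n) ℝ} {c : ℝ}
    (h : (M - c • 1).PosSemidef) (w : Fin n → ℝ) :
    c * (w ⬝ᵥ w) ≤ w ⬝ᵥ (M *ᵥ w) := by
  have h2 := h.dotProduct_mulVec_nonneg w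
  simp only [Matrix.sub_mulVec, Matrix.smul_mulVec, Matrix.one_mulVec,
    dotProduct_sub, dotProduct_smul, star_trivial, smul_eq_mul] at h2
  linarith

lemma quad_le {M : Matrix (Fin n) (Fin n) ℝ} {c : ℝ}
    (h : (c • 1 - M).PosSemidef) (w : Fin n → ℝ) :
    w ⬝ᵥ (M *ᵥ w) ≤ c * (w ⬝ᵥ w) := by
  have h2 := h.dotProduct_mulVec_nonneg w
  simp only [Matrix.sub_mulVec, Matrix.smul_mulVec, Matrix.one_mulVec,
    dotProduct_sub, dotProduct_smul, star_trivial, smul_eq_mul] at h2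
  linarith

lemma psd_sub_of_eigenvalues {M : Matrix (Fin n) (Fin n) ℝ} (hM : M.IsHermitian) {c : ℝ}
    (h : ∀ i, c ≤ hM.eigenvalues i) : (M - c • 1).PosSemidef := by
  have hU : (hM.eigenvectorUnitary : Matrix (Fin n) (Fin n) ℝ) *
      (star hM.eigenvectorUnitary : Matrix (Fin n) (Fin n) ℝ) = 1 :=
    (Matrix.mem_unitaryGroup_iff).mp hM.eigenvectorUnitary.2
  have key : M - c • 1 =
      (hM.eigenvectorUnitary : Matrix (Fin n) (Fin n) ℝ) *
        diagonal (fun i => hM.eigenvalues i - c) *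
        (star hM.eigenvectorUnitary : Matrix (Fin n) (Fin n) ℝ) := by
    have hd : diagonal (fun i => hM.eigenvalues i - c) =
        diagonal (RCLike.ofReal ∘ hM.eigenvalues) - c • 1 := by
      simp [Matrix.diagonal_sub, ← Matrix.diagonal_smul, ← Matrix.diagonal_one]
    rw [hd, Matrix.mul_sub, Matrix.sub_mul]
    rw [show (hM.eigenvectorUnitary : Matrix (Fin n) (Fin n) ℝ) * (c • 1) *
        (star hM.eigenvectorUnitary : Matrix (Fin n) (Fin n) ℝ) = c • 1 by
      rw [Matrix.mul_smul, Matrix.mul_one, Matrix.smul_mul, hU]]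
    conv_lhs => rw [hM.spectral_theorem]
    simp [Unitary.conjStarAlgAut_apply]
  rw [key]
  have : (diagonal (fun i => hM.eigenvalues i - c)).PosSemidef :=
    Matrix.posSemidef_diagonal_iff.mpr fun i => sub_nonneg.mpr (h i)
  simpa [Matrix.star_eq_conjTranspose] using
    this.mul_mul_conjTranspose_same (hM.eigenvectorUnitary : Matrix (Fin n) (Fin n) ℝ)

lemma psd_smul_sub_of_eigenvalues {M : Matrix (Fin n) (Fin n) ℝ} (hM : M.IsHermitian) {c : ℝ}
    (h : ∀ i, hM.eigenvalues i ≤ c) : (c • 1 - M).PosSemidef := by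
  have hU : (hM.eigenvectorUnitary : Matrix (Fin n) (Fin n) ℝ) *
      (star hM.eigenvectorUnitary : Matrix (Fin n) (Fin n) ℝ) = 1 :=
    (Matrix.mem_unitaryGroup_iff).mp hM.eigenvectorUnitary.2
  have key : c • 1 - M =
      (hM.eigenvectorUnitary : Matrix (Fin n) (Fin n) ℝ) *
        diagonal (fun i => c - hM.eigenvalues i) *
        (star hM.eigenvectorUnitary : Matrix (Fin n) (Fin n) ℝ) := by
    have hd : diagonal (fun i => c - hM.eigenvalues i) =
        c • 1 - diagonal (RCLike.ofReal ∘ hM.eigenvalues) := by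
      simp [Matrix.diagonal_sub, ← Matrix.diagonal_smul, ← Matrix.diagonal_one]
    rw [hd, Matrix.mul_sub, Matrix.sub_mul]
    rw [show (hM.eigenvectorUnitary : Matrix (Fin n) (Fin n) ℝ) * (c • 1) *
        (star hM.eigenvectorUnitary : Matrix (Fin n) (Fin n) ℝ) = c • 1 by
      rw [Matrix.mul_smul, Matrix.mul_one, Matrix.smul_mul, hU]]
    conv_lhs => rw [hM.spectral_theorem]
    simp [Unitary.conjStarAlgAut_apply]
  rw [key]
  have : (diagonal (fun i => c - hM.eigenvalues i)).PosSemidef :=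
    Matrix.posSemidef_diagonal_iff.mpr fun i => sub_nonneg.mpr (h i)
  simpa [Matrix.star_eq_conjTranspose] using
    this.mul_mul_conjTranspose_same (hM.eigenvectorUnitary : Matrix (Fin n) (Fin n) ℝ)

lemma inner_toEuclideanLin (M : Matrix (Fin m) (Fin n) ℝ)
    (u : EuclideanSpace ℝ (Fin m)) (v : EuclideanSpace ℝ (Fin n)) :
    ⟪u, toEuclideanLin M v⟫ = (WithLp.equiv 2 _ u) ⬝ᵥ (M *ᵥ (WithLp.equiv 2 _ v)) := by
  rw [EuclideanSpace.inner_eq_star_dotProduct, Matrix.ofLp_toEuclideanLin_apply]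
  simp [dotProduct_comm]

lemma norm_sq_eq_dot (v : EuclideanSpace ℝ (Fin n)) :
    ‖v‖ ^ 2 = (WithLp.equiv 2 _ v) ⬝ᵥ (WithLp.equiv 2 _ v) := by
  rw [← real_inner_self_eq_norm_sq, EuclideanSpace.inner_eq_star_dotProduct]
  simp

/-- A matrix bounded below by `c • 1` with `c > 0` is positive definite. -/
lemma posDef_of_sub {M : Matrix (Fin n) (Fin n) ℝ} {c : ℝ} (hc : 0 < c)
    (h : (M - c • 1).PosSemidef) : M.PosDef := by
  refine Matrix.PosDef.of_dotProduct_mulVec_pos (isHermitian_of_sub_smul_one h) fun w hw => ?_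
  have hq := quad_ge h w
  have hpos : 0 < w ⬝ᵥ w := by
    have := Matrix.dotProduct_star_self_pos_iff (v := w).mpr hw
    simpa using this
  simp only [star_trivial]
  nlinarith

lemma norm_inv_apply_le {M : Matrix (Fin n) (Fin n) ℝ} {c : ℝ} (hc : 0 < c)
    (h : (M - c • 1).PosSemidef) (v : EuclideanSpace ℝ (Fin n)) :
    ‖toEuclideanLin M⁻¹ v‖ ≤ c⁻¹ * ‖v‖ := by
  have hpd := posDef_of_sub hc h
  have hdet : IsUnit M.det := isUnit_iff_isUnit_det M |>.mp hpd.isUnit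
  set u := toEuclideanLin M⁻¹ v with hu
  have hMu : toEuclideanLin M u = v := by
    apply (WithLp.equiv 2 _).injective
    rw [hu, WithLp.equiv_apply, WithLp.equiv_apply, Matrix.ofLp_toEuclideanLin_apply, Matrix.ofLp_toEuclideanLin_apply,
      Matrix.mulVec_mulVec, Matrix.mul_nonsing_inv _ hdet, Matrix.one_mulVec]
  have h1 : c * ‖u‖ ^ 2 ≤ ⟪u, v⟫ := by
    rw [← hMu, inner_toEuclideanLin, norm_sq_eq_dot]
    exact quad_ge h _
  have h2 : ⟪u, v⟫ ≤ ‖u‖ * ‖v‖ := real_inner_le_norm u v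
  rcases eq_or_lt_of_le (norm_nonneg u) with h0 | h0
  · rw [← h0]; positivity
  · have h3 : c * ‖u‖ ≤ ‖v‖ := by nlinarith
    calc ‖u‖ = c⁻¹ * (c * ‖u‖) := by field_simp
      _ ≤ c⁻¹ * ‖v‖ := mul_le_mul_of_nonneg_left h3 (by positivity)

lemma mul_inv_cancel' {M : Matrix (Fin n) (Fin n) ℝ} {c : ℝ} (hc : 0 < c)
    (h : (M - c • 1).PosSemidef) : M * M⁻¹ = 1 :=
  Matrix.mul_nonsing_inv _ (isUnit_iff_isUnit_det M |>.mp (posDef_of_sub hc h).isUnit)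

lemma taylor_bound
    (f : EuclideanSpace ℝ (Fin n) → ℝ)
    (Hess : EuclideanSpace ℝ (Fin n) → Matrix (Fin n) (Fin n) ℝ)
    (hHess : ∀ y, HasFDerivAt (gradient f) (Matrix.toEuclideanCLM (𝕜 := ℝ) (Hess y)) y)
    {L : ℝ}
    (hLip : ∀ y z, Matrix.specNorm (Hess y - Hess z) ≤ L * ‖y - z‖)
    (x d : EuclideanSpace ℝ (Fin n)) :
    ‖gradient f (x + d) - gradient f x - Matrix.toEuclideanCLM (𝕜 := ℝ) (Hess x) d‖
      ≤ L / 2 * ‖d‖ ^ 2 := by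
  set φ : ℝ → EuclideanSpace ℝ (Fin n) := fun t =>
    gradient f (x + t • d) - gradient f x - t • (Matrix.toEuclideanCLM (𝕜 := ℝ) (Hess x) d)
  have hφd : ∀ t : ℝ, HasDerivAt φ
      (Matrix.toEuclideanCLM (𝕜 := ℝ) (Hess (x + t • d)) d
        - Matrix.toEuclideanCLM (𝕜 := ℝ) (Hess x) d) t := by
    intro t
    have h1 : HasDerivAt (fun t : ℝ => x + t • d) d t := by
      simpa using ((hasDerivAt_id t).smul_const d).const_add x
    have h2 : HasDerivAt (fun t : ℝ => gradient f (x + t • d))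
        (Matrix.toEuclideanCLM (𝕜 := ℝ) (Hess (x + t • d)) d) t := by
      exact (hHess (x + t • d)).comp_hasDerivAt t h1
    have h3 : HasDerivAt (fun t : ℝ => t • (Matrix.toEuclideanCLM (𝕜 := ℝ) (Hess x) d))
        (Matrix.toEuclideanCLM (𝕜 := ℝ) (Hess x) d) t := by
      simpa using (hasDerivAt_id t).smul_const (Matrix.toEuclideanCLM (𝕜 := ℝ) (Hess x) d)
    exact (h2.sub_const (gradient f x)).sub h3
  have bound : ∀ t ∈ Set.Ico (0 : ℝ) 1,
      ‖Matrix.toEuclideanCLM (𝕜 := ℝ) (Hess (x + t • d)) d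
        - Matrix.toEuclideanCLM (𝕜 := ℝ) (Hess x) d‖ ≤ (L * ‖d‖ ^ 2) * t := by
    intro t ht
    have hsub : Matrix.toEuclideanCLM (𝕜 := ℝ) (Hess (x + t • d)) d
        - Matrix.toEuclideanCLM (𝕜 := ℝ) (Hess x) d
        = toEuclideanLin (Hess (x + t • d) - Hess x) d := by
      rw [map_sub]
      rfl
    rw [hsub]
    calc ‖toEuclideanLin (Hess (x + t • d) - Hess x) d‖
        ≤ (Hess (x + t • d) - Hess x).specNorm * ‖d‖ := norm_apply_le _ _
      _ ≤ (L * ‖x + t • d - x‖) * ‖d‖ := by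
          apply mul_le_mul_of_nonneg_right _ (norm_nonneg d)
          exact hLip _ _
      _ = (L * ‖d‖ ^ 2) * t := by
          rw [show x + t • d - x = t • d by abel, norm_smul]
          simp [abs_of_nonneg ht.1]
          ring
  have h0 : ‖φ 0‖ ≤ (fun t : ℝ => L * ‖d‖ ^ 2 * t ^ 2 / 2) 0 := by simp [φ]
  have hB : ∀ t : ℝ, HasDerivAt (fun t : ℝ => L * ‖d‖ ^ 2 * t ^ 2 / 2) ((L * ‖d‖ ^ 2) * t) t := by
    intro t
    have := (hasDerivAt_pow 2 t).const_mul (L * ‖d‖ ^ 2 / 2)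
    have e : (fun t : ℝ => L * ‖d‖ ^ 2 * t ^ 2 / 2) = fun y => L * ‖d‖ ^ 2 / 2 * y ^ 2 := by
      ext s; ring
    rw [e]
    exact this.congr_deriv (by rw [show (2:ℕ) - 1 = 1 from rfl]; push_cast; ring)
  have hcont : ContinuousOn φ (Set.Icc 0 1) :=
    (continuous_iff_continuousAt.mpr fun t => (hφd t).continuousAt).continuousOn
  have key := image_norm_le_of_norm_deriv_right_le_deriv_boundary hcont
    (fun t _ => (hφd t).hasDerivWithinAt) h0 hB bound
  have := key (Set.right_mem_Icc.mpr zero_le_one)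
  rw [show L / 2 * ‖d‖ ^ 2 = L * ‖d‖ ^ 2 * 1 ^ 2 / 2 by ring]
  simpa [φ] using this

end AMLAux

set_option maxHeartbeats 1000000

/-- Theorem 4.3, case `ξ > 1`. One step of the adaptive multilevel Newton
method (either an accepted coarse step or a full Newton step) satisfies
`‖∇f(x⁺)‖ ≤ (Lξ⁵/(2σμ²ω⁴)) ‖∇f(x)‖²`. -/
theorem aml_newton_quadratic_rate_xi_gt_one
    {n : ℕ}
    (f : EuclideanSpace ℝ (Fin n) → ℝ)
    (hf : ContDiff ℝ 2 f)
    (Hess : EuclideanSpace ℝ (Fin n) → Matrix (Fin n) (Fin n) ℝ)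
    (hHess : ∀ y, HasFDerivAt (gradient f) (Matrix.toEuclideanCLM (𝕜 := ℝ) (Hess y)) y)
    (μ L : ℝ) (hμ : 0 < μ) (hL : 0 < L)
    (hsc : ∀ y, (Hess y - μ • (1 : Matrix (Fin n) (Fin n) ℝ)).PosSemidef)
    (hLip : ∀ y z, Matrix.specNorm (Hess y - Hess z) ≤ L * ‖y - z‖)
    (σ : ℝ) (hσ0 : 0 < σ) (hσ1 : σ ≤ 1)
    (ω ξ : ℝ) (hω : 0 < ω) (hωξ : ω ≤ ξ) (hξ : 1 < ξ)
    (x xp : EuclideanSpace ℝ (Fin n))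
    (hstep :
      (∃ p : ℕ, ∃ R : Matrix (Fin p) (Fin n) ℝ, p ≤ n ∧ R.rank = p ∧
        (∀ i, R.singularValueT i ∈ Set.Icc ω ξ) ∧
        xp = x - Matrix.toEuclideanLin (Rᵀ * (R * Hess x * Rᵀ)⁻¹ * R) (gradient f x) ∧
        σ * ‖gradient f xp‖ ≤ ‖Matrix.toEuclideanLin R (gradient f xp)‖) ∨
      xp = x - Matrix.toEuclideanLin (Hess x)⁻¹ (gradient f x)) :
    ‖gradient f xp‖ ≤ L * ξ ^ 5 / (2 * σ * μ ^ 2 * ω ^ 4) * ‖gradient f x‖ ^ 2 := by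
  have hξ0 : (0 : ℝ) < ξ := lt_trans one_pos hξ
  set g := gradient f x with hg
  rcases hstep with ⟨p, R, _hpn, _hrank, hsv, hxp, hacc⟩ | hxp
  · -- Coarse step
    set M := R * Hess x * Rᵀ with hMdef
    set dd := Matrix.toEuclideanLin (Rᵀ * M⁻¹ * R) g with hdd
    have hxp' : xp = x + -dd := by rw [hxp]; abel
    -- eigenvalue bounds for R * Rᵀ
    have hconj : Rᴴ = Rᵀ := Matrix.conjTranspose_eq_transpose_of_trivial R
    have hRRH := Matrix.isHermitian_mul_conjTranspose_self R
    have heig_lo : ∀ i, ω ^ 2 ≤ hRRH.eigenvalues i := by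
      intro i
      have h1 := (hsv i).1
      have h2 := Matrix.eigenvalues_self_mul_conjTranspose_nonneg R i
      have := Real.sq_sqrt h2
      unfold Matrix.singularValueT at h1
      nlinarith [Real.sqrt_nonneg (hRRH.eigenvalues i)]
    have heig_hi : ∀ i, hRRH.eigenvalues i ≤ ξ ^ 2 := by
      intro i
      have h1 := (hsv i).2
      have h2 := Matrix.eigenvalues_self_mul_conjTranspose_nonneg R i
      have := Real.sq_sqrt h2
      unfold Matrix.singularValueT at h1
      nlinarith [Real.sqrt_nonneg (hRRH.eigenvalues i)]
    have hlow : (R * Rᵀ - ω ^ 2 • 1).PosSemidef := by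
      have := AMLAux.psd_sub_of_eigenvalues hRRH heig_lo
      rwa [hconj] at this
    have hup : (ξ ^ 2 • 1 - R * Rᵀ).PosSemidef := by
      have := AMLAux.psd_smul_sub_of_eigenvalues hRRH heig_hi
      rwa [hconj] at this
    -- dot product identities
    have dot_RT : ∀ (u : Fin p → ℝ) (z : Fin n → ℝ), u ⬝ᵥ (R *ᵥ z) = (Rᵀ *ᵥ u) ⬝ᵥ z := by
      intro u z
      rw [Matrix.dotProduct_mulVec, Matrix.mulVec_transpose]
    have hRT_dot : ∀ u : Fin p → ℝ, (Rᵀ *ᵥ u) ⬝ᵥ (Rᵀ *ᵥ u) = u ⬝ᵥ ((R * Rᵀ) *ᵥ u) := by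
      intro u
      rw [← Matrix.mulVec_mulVec, dot_RT]
    -- ‖Rᵀ u‖ ≤ ξ ‖u‖
    have hRT_bound : ∀ u : EuclideanSpace ℝ (Fin p),
        ‖Matrix.toEuclideanLin Rᵀ u‖ ≤ ξ * ‖u‖ := by
      intro u
      have hsq : ‖Matrix.toEuclideanLin Rᵀ u‖ ^ 2 ≤ (ξ * ‖u‖) ^ 2 := by
        rw [AMLAux.norm_sq_eq_dot, WithLp.equiv_apply, Matrix.ofLp_toEuclideanLin_apply]
        have := AMLAux.quad_le hup (WithLp.equiv 2 _ u)
        rw [← hRT_dot] at this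
        calc (Rᵀ *ᵥ WithLp.equiv 2 _ u) ⬝ᵥ (Rᵀ *ᵥ WithLp.equiv 2 _ u)
            ≤ ξ ^ 2 * ((WithLp.equiv 2 _ u) ⬝ᵥ (WithLp.equiv 2 _ u)) := this
          _ = (ξ * ‖u‖) ^ 2 := by rw [← AMLAux.norm_sq_eq_dot]; ring
      exact le_of_pow_le_pow_left₀ two_ne_zero (by positivity) hsq
    have hR_spec : R.specNorm ≤ ξ := by
      rw [← AMLAux.specNorm_transpose]
      exact AMLAux.specNorm_le_of_forall hξ0.le hRT_bound
    have hR_bound : ∀ v : EuclideanSpace ℝ (Fin n),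
        ‖Matrix.toEuclideanLin R v‖ ≤ ξ * ‖v‖ := fun v =>
      le_trans (AMLAux.norm_apply_le R v)
        (mul_le_mul_of_nonneg_right hR_spec (norm_nonneg v))
    -- M is bounded below by μω² • 1
    have hc : (0 : ℝ) < μ * ω ^ 2 := by positivity
    have hH : (Hess x).IsHermitian := AMLAux.isHermitian_of_sub_smul_one (hsc x)
    have hHt : (Hess x)ᵀ = Hess x := by
      rw [← Matrix.conjTranspose_eq_transpose_of_trivial]
      exact hH.eq
    have hMherm : M.IsHermitian := by
      unfold Matrix.IsHermitian
      rw [Matrix.conjTranspose_eq_transpose_of_trivial, hMdef]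
      simp [Matrix.transpose_mul, Matrix.mul_assoc, hHt]
    have hMlow : (M - (μ * ω ^ 2) • 1).PosSemidef := by
      refine Matrix.PosSemidef.of_dotProduct_mulVec_nonneg ?_ ?_
      · unfold Matrix.IsHermitian
        rw [Matrix.conjTranspose_sub, hMherm.eq]
        congr 1
        simp
      · intro u
        simp only [star_trivial, Matrix.sub_mulVec, Matrix.smul_mulVec,
          Matrix.one_mulVec, dotProduct_sub, dotProduct_smul, smul_eq_mul]
        have e1 : u ⬝ᵥ (M *ᵥ u) = (Rᵀ *ᵥ u) ⬝ᵥ (Hess x *ᵥ (Rᵀ *ᵥ u)) := by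
          calc u ⬝ᵥ (M *ᵥ u) = u ⬝ᵥ (R *ᵥ ((Hess x * Rᵀ) *ᵥ u)) := by
                rw [Matrix.mulVec_mulVec, hMdef, Matrix.mul_assoc]
            _ = (Rᵀ *ᵥ u) ⬝ᵥ ((Hess x * Rᵀ) *ᵥ u) := dot_RT _ _
            _ = (Rᵀ *ᵥ u) ⬝ᵥ (Hess x *ᵥ (Rᵀ *ᵥ u)) := by rw [Matrix.mulVec_mulVec]
        have e2 : μ * ((Rᵀ *ᵥ u) ⬝ᵥ (Rᵀ *ᵥ u)) ≤ (Rᵀ *ᵥ u) ⬝ᵥ (Hess x *ᵥ (Rᵀ *ᵥ u)) :=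
          AMLAux.quad_ge (hsc x) _
        have e3 : ω ^ 2 * (u ⬝ᵥ u) ≤ (Rᵀ *ᵥ u) ⬝ᵥ (Rᵀ *ᵥ u) := by
          rw [hRT_dot u]
          exact AMLAux.quad_ge hlow u
        nlinarith [e1, e2, e3, hμ]
    have hMinv : M * M⁻¹ = 1 := AMLAux.mul_inv_cancel' hc hMlow
    have hMinv_bound : ∀ v : EuclideanSpace ℝ (Fin p),
        ‖Matrix.toEuclideanLin M⁻¹ v‖ ≤ (μ * ω ^ 2)⁻¹ * ‖v‖ :=
      AMLAux.norm_inv_apply_le hc hMlow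
    -- bound on the step
    have hdd_bound : ‖dd‖ ≤ ξ ^ 2 / (μ * ω ^ 2) * ‖g‖ := by
      have hsplit : dd = Matrix.toEuclideanLin Rᵀ
          (Matrix.toEuclideanLin M⁻¹ (Matrix.toEuclideanLin R g)) := by
        rw [hdd, AMLAux.toEuclideanLin_mul_apply, AMLAux.toEuclideanLin_mul_apply]
      rw [hsplit]
      calc ‖Matrix.toEuclideanLin Rᵀ (Matrix.toEuclideanLin M⁻¹ (Matrix.toEuclideanLin R g))‖
          ≤ ξ * ‖Matrix.toEuclideanLin M⁻¹ (Matrix.toEuclideanLin R g)‖ := hRT_bound _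
        _ ≤ ξ * ((μ * ω ^ 2)⁻¹ * ‖Matrix.toEuclideanLin R g‖) := by
            apply mul_le_mul_of_nonneg_left (hMinv_bound _) hξ0.le
        _ ≤ ξ * ((μ * ω ^ 2)⁻¹ * (ξ * ‖g‖)) := by
            apply mul_le_mul_of_nonneg_left _ hξ0.le
            apply mul_le_mul_of_nonneg_left (hR_bound _) (by positivity)
        _ = ξ ^ 2 / (μ * ω ^ 2) * ‖g‖ := by field_simp
    -- R ∘ Hess x applied to the step reproduces -R g
    have hmat : R * Hess x * (Rᵀ * M⁻¹ * R) = R := by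
      calc R * Hess x * (Rᵀ * M⁻¹ * R) = M * M⁻¹ * R := by
            rw [hMdef]; simp only [Matrix.mul_assoc]
        _ = R := by rw [hMinv, Matrix.one_mul]
    have hpos : Matrix.toEuclideanLin R (Matrix.toEuclideanLin (Hess x) dd)
        = Matrix.toEuclideanLin R g := by
      rw [hdd, ← AMLAux.toEuclideanLin_mul_apply, ← AMLAux.toEuclideanLin_mul_apply]
      rw [hmat]
    have hRHd : Matrix.toEuclideanLin R
        (Matrix.toEuclideanCLM (𝕜 := ℝ) (Hess x) (-dd)) = -(Matrix.toEuclideanLin R g) := by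
      rw [AMLAux.toEuclideanCLM_apply, map_neg, map_neg, hpos]
    -- Taylor estimate
    have htay := AMLAux.taylor_bound f Hess hHess hLip x (-dd)
    rw [← hxp', ← hg] at htay
    have hres : Matrix.toEuclideanLin R (gradient f xp) =
        Matrix.toEuclideanLin R
          (gradient f xp - g - Matrix.toEuclideanCLM (𝕜 := ℝ) (Hess x) (-dd)) := by
      rw [map_sub, map_sub, hRHd]
      abel
    have hRgxp : ‖Matrix.toEuclideanLin R (gradient f xp)‖ ≤ ξ * (L / 2 * ‖dd‖ ^ 2) := by
      rw [hres]
      calc ‖Matrix.toEuclideanLin R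
            (gradient f xp - g - Matrix.toEuclideanCLM (𝕜 := ℝ) (Hess x) (-dd))‖
          ≤ ξ * ‖gradient f xp - g - Matrix.toEuclideanCLM (𝕜 := ℝ) (Hess x) (-dd)‖ :=
            hR_bound _
        _ ≤ ξ * (L / 2 * ‖-dd‖ ^ 2) := mul_le_mul_of_nonneg_left htay hξ0.le
        _ = ξ * (L / 2 * ‖dd‖ ^ 2) := by rw [norm_neg]
    -- assemble
    have hdd2 : ‖dd‖ ^ 2 ≤ (ξ ^ 2 / (μ * ω ^ 2) * ‖g‖) ^ 2 :=
      pow_le_pow_left₀ (norm_nonneg dd) hdd_bound 2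
    have hchain : σ * ‖gradient f xp‖ ≤ ξ * (L / 2 * (ξ ^ 2 / (μ * ω ^ 2) * ‖g‖) ^ 2) := by
      calc σ * ‖gradient f xp‖ ≤ ‖Matrix.toEuclideanLin R (gradient f xp)‖ := hacc
        _ ≤ ξ * (L / 2 * ‖dd‖ ^ 2) := hRgxp
        _ ≤ ξ * (L / 2 * (ξ ^ 2 / (μ * ω ^ 2) * ‖g‖) ^ 2) := by
            apply mul_le_mul_of_nonneg_left _ hξ0.le
            apply mul_le_mul_of_nonneg_left hdd2 (by positivity)
    have hfinal : L * ξ ^ 5 / (2 * σ * μ ^ 2 * ω ^ 4) * ‖g‖ ^ 2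
        = σ⁻¹ * (ξ * (L / 2 * (ξ ^ 2 / (μ * ω ^ 2) * ‖g‖) ^ 2)) := by
      field_simp
      try ring
    rw [hfinal]
    calc ‖gradient f xp‖ = σ⁻¹ * (σ * ‖gradient f xp‖) := by field_simp
      _ ≤ σ⁻¹ * (ξ * (L / 2 * (ξ ^ 2 / (μ * ω ^ 2) * ‖g‖) ^ 2)) :=
          mul_le_mul_of_nonneg_left hchain (by positivity)
  · -- Newton step
    set dd := Matrix.toEuclideanLin (Hess x)⁻¹ g with hdd
    have hxp' : xp = x + -dd := by rw [hxp]; abel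
    have hHinv : Hess x * (Hess x)⁻¹ = 1 := AMLAux.mul_inv_cancel' hμ (hsc x)
    have hdd_bound : ‖dd‖ ≤ μ⁻¹ * ‖g‖ := AMLAux.norm_inv_apply_le hμ (hsc x) g
    have hHd : Matrix.toEuclideanCLM (𝕜 := ℝ) (Hess x) (-dd) = -g := by
      rw [map_neg, AMLAux.toEuclideanCLM_apply, hdd, ← AMLAux.toEuclideanLin_mul_apply,
        hHinv]
      congr 1
      apply (WithLp.equiv 2 _).injective
      rw [WithLp.equiv_apply, WithLp.equiv_apply, Matrix.ofLp_toEuclideanLin_apply, Matrix.one_mulVec]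
    have htay := AMLAux.taylor_bound f Hess hHess hLip x (-dd)
    rw [← hxp', ← hg, hHd] at htay
    have hgxp : ‖gradient f xp‖ ≤ L / 2 * ‖dd‖ ^ 2 := by
      have : gradient f xp - g - -g = gradient f xp := by abel
      rw [this, norm_neg] at htay
      exact htay
    have hdd2 : ‖dd‖ ^ 2 ≤ (μ⁻¹ * ‖g‖) ^ 2 := pow_le_pow_left₀ (norm_nonneg dd) hdd_bound 2
    have h1 : ‖gradient f xp‖ ≤ L / (2 * μ ^ 2) * ‖g‖ ^ 2 := by
      calc ‖gradient f xp‖ ≤ L / 2 * ‖dd‖ ^ 2 := hgxp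
        _ ≤ L / 2 * (μ⁻¹ * ‖g‖) ^ 2 := mul_le_mul_of_nonneg_left hdd2 (by positivity)
        _ = L / (2 * μ ^ 2) * ‖g‖ ^ 2 := by field_simp; try ring
    refine le_trans h1 ?_
    apply mul_le_mul_of_nonneg_right _ (by positivity)
    rw [div_le_div_iff₀ (by positivity) (by positivity)]
    have hω4 : ω ^ 4 ≤ ξ ^ 4 := pow_le_pow_left₀ hω.le hωξ 4
    have hξ4 : ξ ^ 4 ≤ ξ ^ 5 := pow_le_pow_right₀ hξ.le (by norm_num)
    have hσω : σ * ω ^ 4 ≤ ξ ^ 5 := by nlinarith [pow_pos hω 4]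
    nlinarith [mul_pos hL (pow_pos hμ 2), hσω]


end
end

section
/- Let f : ℝⁿ → ℝ be twice continuously differentiable and μ-strongly convex with μ > 0. Let R ∈ ℝ^{p×n} have full row rank p ≤ n, P := Rᵀ, and suppose all singular values of P lie in [ω, ξ] with 0 < ω ≤ ξ. Then for every x ∈ ℝⁿ, the coarse direction d := −P(R∇²f(x)P)⁻¹R∇f(x) satisfies ‖d‖ ≤ (ξ/(μω²)) ‖R∇f(x)‖. -/
open Matrix

noncomputable section

private lemma dot_self_nonneg {k : ℕ} (v : Fin k → ℝ) : 0 ≤ v ⬝ᵥ v :=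
  Finset.sum_nonneg fun i _ => mul_self_nonneg (v i)

private lemma norm_equiv_symm {k : ℕ} (v : Fin k → ℝ) :
    ‖(WithLp.equiv 2 (Fin k → ℝ)).symm v‖ = Real.sqrt (v ⬝ᵥ v) := by
  rw [EuclideanSpace.norm_eq]
  congr 1
  simp [dotProduct, Real.norm_eq_abs, sq_abs, pow_two]

private lemma inner_equiv_symm {k : ℕ} (v w : Fin k → ℝ) :
    (inner ℝ ((WithLp.equiv 2 (Fin k → ℝ)).symm v) ((WithLp.equiv 2 (Fin k → ℝ)).symm w) : ℝ)
      = v ⬝ᵥ w := by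
  simp [PiLp.inner_apply, dotProduct, mul_comm]

private lemma quad_bounds {k : ℕ} {M : Matrix (Fin k) (Fin k) ℝ} (hM : M.IsHermitian)
    {a b : ℝ} (ha : ∀ i, a ≤ hM.eigenvalues i) (hb : ∀ i, hM.eigenvalues i ≤ b)
    (v : Fin k → ℝ) :
    a * (v ⬝ᵥ v) ≤ v ⬝ᵥ (M *ᵥ v) ∧ v ⬝ᵥ (M *ᵥ v) ≤ b * (v ⬝ᵥ v) := by
  classical
  set U : Matrix (Fin k) (Fin k) ℝ := (hM.eigenvectorUnitary : Matrix (Fin k) (Fin k) ℝ) with hUdef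
  have hU1 : U * star U = 1 := (Matrix.mem_unitaryGroup_iff).mp hM.eigenvectorUnitary.2
  set u : Fin k → ℝ := star U *ᵥ v with hu
  have key : ∀ w : Fin k → ℝ, v ⬝ᵥ (U *ᵥ w) = u ⬝ᵥ w := by
    intro w
    rw [Matrix.dotProduct_mulVec]
    congr 1
    rw [hu, Matrix.star_eq_conjTranspose, Matrix.conjTranspose_eq_transpose_of_trivial,
      Matrix.mulVec_transpose]
  have hMeq : M = U * Matrix.diagonal hM.eigenvalues * star U := by
    have := hM.spectral_theorem
    simpa [RCLike.ofReal_real_eq_id, Function.comp] using this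
  have hMv : M *ᵥ v = U *ᵥ fun i => hM.eigenvalues i * u i := by
    have h3 : (fun i => hM.eigenvalues i * u i) = Matrix.diagonal hM.eigenvalues *ᵥ u := by
      ext i; simp [Matrix.mulVec_diagonal]
    rw [h3, Matrix.mulVec_mulVec, hu, Matrix.mulVec_mulVec, ← hMeq]
  have h1 : v ⬝ᵥ (M *ᵥ v) = ∑ i, hM.eigenvalues i * u i ^ 2 := by
    rw [hMv, key]
    simp only [dotProduct, Matrix.mulVec_diagonal]
    exact Finset.sum_congr rfl fun i _ => by ring
  have hvU : v = U *ᵥ u := by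
    rw [hu, Matrix.mulVec_mulVec, hU1, Matrix.one_mulVec]
  have h2 : v ⬝ᵥ v = ∑ i, u i ^ 2 := by
    nth_rewrite 2 [hvU]
    rw [key]
    simp [dotProduct, pow_two]
  constructor
  · rw [h1, h2, Finset.mul_sum]
    exact Finset.sum_le_sum fun i _ => mul_le_mul_of_nonneg_right (ha i) (sq_nonneg _)
  · rw [h1, h2, Finset.mul_sum]
    exact Finset.sum_le_sum fun i _ => mul_le_mul_of_nonneg_right (hb i) (sq_nonneg _)

private lemma toEuclideanLin_equiv_symm {m k : ℕ} (M : Matrix (Fin m) (Fin k) ℝ) (v : Fin k → ℝ) :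
    Matrix.toEuclideanLin M ((WithLp.equiv 2 (Fin k → ℝ)).symm v) =
      (WithLp.equiv 2 (Fin m → ℝ)).symm (M *ᵥ v) := rfl

/-- The coarse direction `d = −P(R∇²f(x)P)⁻¹R∇f(x)` satisfies
`‖d‖ ≤ (ξ/(μω²)) ‖R∇f(x)‖`. -/
theorem norm_coarse_direction_le
    {n p : ℕ} (hp : p ≤ n)
    (f : EuclideanSpace ℝ (Fin n) → ℝ)
    (hf : ContDiff ℝ 2 f)
    (Hess : EuclideanSpace ℝ (Fin n) → Matrix (Fin n) (Fin n) ℝ)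
    (hHess : ∀ y, HasFDerivAt (gradient f) (Matrix.toEuclideanCLM (𝕜 := ℝ) (Hess y)) y)
    (μ : ℝ) (hμ : 0 < μ)
    (hsc : ∀ y, (Hess y - μ • (1 : Matrix (Fin n) (Fin n) ℝ)).PosSemidef)
    (R : Matrix (Fin p) (Fin n) ℝ) (hR : R.rank = p)
    (ω ξ : ℝ) (hω : 0 < ω) (hωξ : ω ≤ ξ)
    (hsv : ∀ i, R.singularValueT i ∈ Set.Icc ω ξ) :
    ∀ x : EuclideanSpace ℝ (Fin n),
      ‖-(Matrix.toEuclideanLin (Rᵀ * (R * Hess x * Rᵀ)⁻¹ * R) (gradient f x))‖ ≤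
        ξ / (μ * ω ^ 2) * ‖Matrix.toEuclideanLin R (gradient f x)‖ := by
  intro x
  classical
  have hξ : 0 < ξ := lt_of_lt_of_le hω hωξ
  set H : Matrix (Fin n) (Fin n) ℝ := Hess x with hHdef
  set g : Fin n → ℝ := WithLp.equiv 2 (Fin n → ℝ) (gradient f x) with hg
  have hscx := hsc x
  -- H is Hermitian
  have hone : (μ • (1 : Matrix (Fin n) (Fin n) ℝ)).IsHermitian := by
    unfold Matrix.IsHermitian
    rw [Matrix.conjTranspose_smul, Matrix.conjTranspose_one]
    simp
  have hH : H.IsHermitian := by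
    have h1 := hscx.1
    have e : H = (H - μ • 1) + μ • (1 : Matrix (Fin n) (Fin n) ℝ) := (sub_add_cancel _ _).symm
    rw [e]
    exact h1.add hone
  -- strong convexity quadratic bound
  have hHq : ∀ u : Fin n → ℝ, μ * (u ⬝ᵥ u) ≤ u ⬝ᵥ (H *ᵥ u) := by
    intro u
    have h0 := hscx.dotProduct_mulVec_nonneg u
    rw [star_trivial] at h0
    have e : u ⬝ᵥ ((H - μ • 1) *ᵥ u) = u ⬝ᵥ (H *ᵥ u) - μ * (u ⬝ᵥ u) := by
      rw [Matrix.sub_mulVec, dotProduct_sub, Matrix.smul_mulVec, Matrix.one_mulVec,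
        dotProduct_smul, smul_eq_mul]
    rw [e] at h0
    linarith
  -- eigenvalue bounds for R * Rᴴ
  have hG := Matrix.isHermitian_mul_conjTranspose_self R
  have hGpsd := Matrix.posSemidef_self_mul_conjTranspose R
  have hGev : ∀ i, ω ^ 2 ≤ hG.eigenvalues i ∧ hG.eigenvalues i ≤ ξ ^ 2 := by
    intro i
    have h0 : 0 ≤ hG.eigenvalues i := hGpsd.eigenvalues_nonneg i
    obtain ⟨hl, hr⟩ := hsv i
    unfold Matrix.singularValueT at hl hr
    constructor
    · have := pow_le_pow_left₀ hω.le hl 2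
      rwa [Real.sq_sqrt h0] at this
    · have := pow_le_pow_left₀ (Real.sqrt_nonneg _) hr 2
      rwa [Real.sq_sqrt h0] at this
  have hRRq := fun w => quad_bounds hG (fun i => (hGev i).1) (fun i => (hGev i).2) w
  have hRT : Rᴴ = Rᵀ := Matrix.conjTranspose_eq_transpose_of_trivial R
  have hPt : ∀ w : Fin p → ℝ, (Rᵀ *ᵥ w) ⬝ᵥ (Rᵀ *ᵥ w) = w ⬝ᵥ ((R * Rᴴ) *ᵥ w) := by
    intro w
    have e : Rᵀ *ᵥ w = w ᵥ* R := Matrix.mulVec_transpose R w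
    rw [hRT, e, ← Matrix.mulVec_mulVec, e, Matrix.dotProduct_mulVec]
  set A : Matrix (Fin p) (Fin p) ℝ := R * H * Rᵀ with hAdef
  have hAherm : A.IsHermitian := by
    rw [hAdef, ← hRT]
    exact Matrix.isHermitian_mul_mul_conjTranspose R hH
  have hAq : ∀ w : Fin p → ℝ, μ * (ω ^ 2 * (w ⬝ᵥ w)) ≤ w ⬝ᵥ (A *ᵥ w) := by
    intro w
    have e1 : w ⬝ᵥ (A *ᵥ w) = (Rᵀ *ᵥ w) ⬝ᵥ (H *ᵥ (Rᵀ *ᵥ w)) := by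
      have e : Rᵀ *ᵥ w = w ᵥ* R := Matrix.mulVec_transpose R w
      rw [hAdef, ← Matrix.mulVec_mulVec, ← Matrix.mulVec_mulVec, Matrix.dotProduct_mulVec w R,
        e]
    have h2 : ω ^ 2 * (w ⬝ᵥ w) ≤ (Rᵀ *ᵥ w) ⬝ᵥ (Rᵀ *ᵥ w) := by
      rw [hPt w]; exact (hRRq w).1
    calc μ * (ω ^ 2 * (w ⬝ᵥ w)) ≤ μ * ((Rᵀ *ᵥ w) ⬝ᵥ (Rᵀ *ᵥ w)) :=
          mul_le_mul_of_nonneg_left h2 hμ.le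
      _ ≤ (Rᵀ *ᵥ w) ⬝ᵥ (H *ᵥ (Rᵀ *ᵥ w)) := hHq _
      _ = w ⬝ᵥ (A *ᵥ w) := e1.symm
  have hApd : A.PosDef := by
    refine Matrix.PosDef.of_dotProduct_mulVec_pos hAherm fun w hw => ?_
    have h1 := hAq w
    have h2 : 0 < w ⬝ᵥ w :=
      lt_of_le_of_ne (dot_self_nonneg w) (fun h => hw (dotProduct_self_eq_zero.mp h.symm))
    rw [star_trivial]
    nlinarith [mul_pos (mul_pos hμ (pow_pos hω 2)) h2]
  have hdet : IsUnit A.det := (Matrix.isUnit_iff_isUnit_det A).mp hApd.isUnit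
  set z : Fin p → ℝ := R *ᵥ g with hz
  set w : Fin p → ℝ := A⁻¹ *ᵥ z with hw
  set d : Fin n → ℝ := Rᵀ *ᵥ w with hd
  have hAwz : A *ᵥ w = z := by
    rw [hw, Matrix.mulVec_mulVec, Matrix.mul_nonsing_inv A hdet, Matrix.one_mulVec]
  -- rewrite the goal
  have hgv : gradient f x = (WithLp.equiv 2 (Fin n → ℝ)).symm g :=
    ((WithLp.equiv 2 (Fin n → ℝ)).symm_apply_apply (gradient f x)).symm
  rw [norm_neg, hgv, toEuclideanLin_equiv_symm,
    toEuclideanLin_equiv_symm, norm_equiv_symm, norm_equiv_symm]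
  have hdv : (Rᵀ * A⁻¹ * R) *ᵥ g = d := by
    rw [← Matrix.mulVec_mulVec, ← Matrix.mulVec_mulVec]
  rw [hdv]
  set nw : ℝ := Real.sqrt (w ⬝ᵥ w) with hnw
  set nz : ℝ := Real.sqrt (z ⬝ᵥ z) with hnz
  have hnz0 : 0 ≤ nz := Real.sqrt_nonneg _
  have hnw0 : 0 ≤ nw := Real.sqrt_nonneg _
  have hw2 : w ⬝ᵥ w = nw ^ 2 := (Real.sq_sqrt (dot_self_nonneg w)).symm
  have hz2 : z ⬝ᵥ z = nz ^ 2 := (Real.sq_sqrt (dot_self_nonneg z)).symm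
  have step1 : d ⬝ᵥ d ≤ ξ ^ 2 * (w ⬝ᵥ w) := by
    rw [hd, hPt w]; exact (hRRq w).2
  have hcs : w ⬝ᵥ z ≤ nw * nz := by
    have h := real_inner_le_norm ((WithLp.equiv 2 (Fin p → ℝ)).symm w)
      ((WithLp.equiv 2 (Fin p → ℝ)).symm z)
    rwa [inner_equiv_symm, norm_equiv_symm, norm_equiv_symm] at h
  have step3 : μ * ω ^ 2 * nw ^ 2 ≤ nw * nz := by
    have h1 := hAq w
    rw [hAwz] at h1
    rw [← hw2]
    nlinarith
  have h4 : μ * ω ^ 2 * nw ≤ nz := by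
    rcases eq_or_lt_of_le hnw0 with h | h
    · rw [← h]; simpa using hnz0
    · nlinarith
  have h5 : Real.sqrt (d ⬝ᵥ d) ≤ ξ * nw := by
    have h6 : Real.sqrt (d ⬝ᵥ d) ≤ Real.sqrt (ξ ^ 2 * (w ⬝ᵥ w)) := Real.sqrt_le_sqrt step1
    rwa [Real.sqrt_mul (sq_nonneg ξ), Real.sqrt_sq hξ.le] at h6
  have hpos : 0 < μ * ω ^ 2 := by positivity
  calc Real.sqrt (d ⬝ᵥ d) ≤ ξ * nw := h5
    _ ≤ ξ / (μ * ω ^ 2) * nz := by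
        rw [div_mul_eq_mul_div, le_div_iff₀ hpos]
        nlinarith


end
end

section
/- Let H, G ∈ ℝ^{n×n} be symmetric positive definite matrices and let a, b ∈ ℝ be such that aH ⪯ G − H ⪯ bH in the Loewner (positive semidefinite) order. Then (G − H) H⁻¹ (G − H) ⪯ c² H, where c := max{|a|, |b|}. -/
open Matrix

noncomputable section

private lemma aux_scalar (p q c : ℝ) (hp : 0 ≤ p) (hq : 0 ≤ q) (hc : 0 ≤ c)
    (h : ∀ s : ℝ, 0 < s → 2 * q ≤ c * (s * p + q / s)) : q ≤ c ^ 2 * p := by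
  rcases eq_or_lt_of_le hq with h0 | hq
  · nlinarith
  rcases eq_or_lt_of_le hp with hp0 | hp
  · exfalso
    rcases eq_or_lt_of_le hc with hc0 | hc
    · have := h 1 one_pos
      nlinarith
    · have h2 := h c hc
      have h3 : c * (c * p + q / c) = c * c * p + q := by
        field_simp
      nlinarith
  · have hsq : 0 < Real.sqrt q := Real.sqrt_pos.2 hq
    have hsp : 0 < Real.sqrt p := Real.sqrt_pos.2 hp
    set s : ℝ := Real.sqrt q / Real.sqrt p with hs_def
    have hs : 0 < s := div_pos hsq hsp
    have h2 := h s hs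
    have hqe : Real.sqrt q ^ 2 = q := Real.sq_sqrt hq.le
    have hpe : Real.sqrt p ^ 2 = p := Real.sq_sqrt hp.le
    have h3 : s * p = Real.sqrt q * Real.sqrt p := by
      rw [hs_def]
      field_simp
      nlinarith
    have h4 : q / s = Real.sqrt q * Real.sqrt p := by
      rw [hs_def]
      rw [div_div_eq_mul_div, div_eq_iff hsq.ne']
      nlinarith
    rw [h3, h4] at h2
    have h5 : q ≤ c * (Real.sqrt q * Real.sqrt p) := by linarith
    have h6 : q * q ≤ (c * (Real.sqrt q * Real.sqrt p)) * (c * (Real.sqrt q * Real.sqrt p)) :=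
      mul_le_mul h5 h5 hq.le (by positivity)
    have h7 : (c * (Real.sqrt q * Real.sqrt p)) * (c * (Real.sqrt q * Real.sqrt p))
        = c ^ 2 * (q * p) := by
      linear_combination (c ^ 2 * Real.sqrt p ^ 2) * hqe + (c ^ 2 * q) * hpe
    rw [h7] at h6
    nlinarith

private lemma quad_comm {n : ℕ} (E : Matrix (Fin n) (Fin n) ℝ) (hE : Eᵀ = E)
    (x y : Fin n → ℝ) : x ⬝ᵥ E *ᵥ y = y ⬝ᵥ E *ᵥ x := by
  have h1 : (Eᵀ *ᵥ x) ⬝ᵥ y = x ⬝ᵥ E *ᵥ y := by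
    rw [mulVec_transpose, ← dotProduct_mulVec]
  rw [← h1, hE, dotProduct_comm]

private lemma expand_quad {n : ℕ} (M : Matrix (Fin n) (Fin n) ℝ) (x y : Fin n → ℝ) (u v : ℝ) :
    (u • x + v • y) ⬝ᵥ M *ᵥ (u • x + v • y) =
      u ^ 2 * (x ⬝ᵥ M *ᵥ x) + u * v * (x ⬝ᵥ M *ᵥ y) + u * v * (y ⬝ᵥ M *ᵥ x)
        + v ^ 2 * (y ⬝ᵥ M *ᵥ y) := by
  simp only [mulVec_add, mulVec_smul, dotProduct_add, add_dotProduct, smul_dotProduct,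
    dotProduct_smul, smul_eq_mul]
  ring

/-- Lemma 4.5. If `H, G` are symmetric positive definite and
`aH ⪯ G − H ⪯ bH` in the Loewner order, then `(G − H)H⁻¹(G − H) ⪯ c²H` with
`c = max{|a|, |b|}`. -/
theorem sandwich_quadratic_form_bound
    {n : ℕ} (H G : Matrix (Fin n) (Fin n) ℝ)
    (hH : H.PosDef) (hG : G.PosDef) (a b : ℝ)
    (h1 : ((G - H) - a • H).PosSemidef)
    (h2 : (b • H - (G - H)).PosSemidef) :
    ((max |a| |b|) ^ 2 • H - (G - H) * H⁻¹ * (G - H)).PosSemidef := by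
  set c : ℝ := max |a| |b| with hc_def
  set E : Matrix (Fin n) (Fin n) ℝ := G - H with hE_def
  have hEherm : E.IsHermitian := hG.1.sub hH.1
  have hEsym : Eᵀ = E := by
    have := hEherm.eq; rwa [conjTranspose_eq_transpose_of_trivial] at this
  have hHsym : Hᵀ = H := by
    have := hH.1.eq; rwa [conjTranspose_eq_transpose_of_trivial] at this
  have hc0 : 0 ≤ c := le_trans (abs_nonneg a) (le_max_left _ _)
  have hac : -c ≤ a := by
    have : |a| ≤ c := le_max_left _ _
    cases abs_cases a <;> linarith
  have hbc : b ≤ c := le_trans (le_abs_self b) (le_max_right _ _)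
  have hquad : ∀ z : Fin n → ℝ, |z ⬝ᵥ E *ᵥ z| ≤ c * (z ⬝ᵥ H *ᵥ z) := by
    intro z
    have hz1 := h1.dotProduct_mulVec_nonneg z
    have hz2 := h2.dotProduct_mulVec_nonneg z
    simp only [star_trivial, sub_mulVec, smul_mulVec, dotProduct_sub,
      dotProduct_smul, smul_eq_mul] at hz1 hz2
    have hzH : 0 ≤ z ⬝ᵥ H *ᵥ z := by simpa using hH.posSemidef.dotProduct_mulVec_nonneg z
    rw [abs_le]
    constructor <;> nlinarith
  refine posSemidef_iff_dotProduct_mulVec.mpr ⟨?_, ?_⟩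
  · -- Hermitian
    refine Matrix.IsHermitian.sub ?_ ?_
    · show (c ^ 2 • H)ᴴ = c ^ 2 • H
      rw [conjTranspose_smul, hH.1.eq, star_trivial]
    · have := Matrix.isHermitian_mul_mul_conjTranspose E hH.1.inv
      have hEc : Eᴴ = E := hEherm
      rwa [hEc] at this
  · intro x
    set p : ℝ := x ⬝ᵥ H *ᵥ x with hp_def
    set y : Fin n → ℝ := H⁻¹ *ᵥ (E *ᵥ x) with hy_def
    set q : ℝ := x ⬝ᵥ E *ᵥ y with hq_def
    have hHy : H *ᵥ y = E *ᵥ x := by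
      rw [hy_def, mulVec_mulVec, Matrix.mul_nonsing_inv _ hH.det_pos.ne'.isUnit, one_mulVec]
    have hyHy : y ⬝ᵥ H *ᵥ y = q := by
      rw [hHy, hq_def, quad_comm E hEsym]
    have hq0 : 0 ≤ q := by
      rw [← hyHy]
      simpa using hH.posSemidef.dotProduct_mulVec_nonneg y
    have hp0 : 0 ≤ p := by simpa [hp_def] using hH.posSemidef.dotProduct_mulVec_nonneg x
    have key : ∀ s : ℝ, 0 < s → 2 * q ≤ c * (s * p + q / s) := by
      intro s hs
      set t : ℝ := Real.sqrt s with ht_def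
      have ht : 0 < t := Real.sqrt_pos.2 hs
      have ht2 : t ^ 2 = s := Real.sq_sqrt hs.le
      have hw1 := (abs_le.1 (hquad (t • x + t⁻¹ • y))).2
      have hw2 := (abs_le.1 (hquad (t • x + (-t⁻¹) • y))).1
      rw [expand_quad, expand_quad] at hw1
      rw [expand_quad, expand_quad] at hw2
      have hcomm : y ⬝ᵥ E *ᵥ x = q := by rw [hq_def, quad_comm E hEsym]
      have hxEy : x ⬝ᵥ E *ᵥ y = q := hq_def.symm
      have htt : t * t⁻¹ = 1 := mul_inv_cancel₀ ht.ne'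
      have htt' : t * -t⁻¹ = -1 := by
        rw [mul_neg, mul_inv_cancel₀ ht.ne']
      have hti2 : t⁻¹ ^ 2 = 1 / s := by
        rw [← ht2]
        field_simp
      have hneg2 : (-t⁻¹ : ℝ) ^ 2 = 1 / s := by rw [neg_pow]; simp [hti2]
      rw [hcomm, hxEy, hyHy, ← hp_def, htt, ht2, hti2] at hw1
      rw [hcomm, hxEy, hyHy, ← hp_def, htt', ht2, hneg2] at hw2
      ring_nf at hw1 hw2 ⊢
      linarith
    have hfinal : q ≤ c ^ 2 * p := aux_scalar p q c hp0 hq0 hc0 key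
    have hvec : ((c ^ 2 • H - E * H⁻¹ * E) *ᵥ x) = c ^ 2 • (H *ᵥ x) - E *ᵥ (H⁻¹ *ᵥ (E *ᵥ x)) := by
      rw [sub_mulVec, smul_mulVec, mulVec_mulVec, mulVec_mulVec]
    simp only [star_trivial]
    rw [hvec, dotProduct_sub, dotProduct_smul, smul_eq_mul]
    have hqq : x ⬝ᵥ E *ᵥ (H⁻¹ *ᵥ (E *ᵥ x)) = q := by rw [hq_def, hy_def]
    rw [hqq, ← hp_def]
    linarith
end
end

section
/- Let A ∈ ℝ^{n×n} be symmetric positive definite and let R ∈ ℝ^{p×n} have full row rank p ≤ n. Then for every v ∈ ℝⁿ, vᵀRᵀ(RARᵀ)⁻¹Rv ≤ vᵀA⁻¹v; equivalently, Rᵀ(RARᵀ)⁻¹R ⪯ A⁻¹ in the Loewner order. In particular, for a twice continuously differentiable function f : ℝⁿ → ℝ with positive definite Hessian, the approximate decrement ((R∇f(x))ᵀ(R∇²f(x)Rᵀ)⁻¹(R∇f(x)))^{1/2} never exceeds the Newton decrement (∇f(x)ᵀ∇²f(x)⁻¹∇f(x))^{1/2}. -/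
open Matrix

noncomputable section

private lemma loewner_key {n p : ℕ}
    (A : Matrix (Fin n) (Fin n) ℝ) (hA : A.PosDef)
    (R : Matrix (Fin p) (Fin n) ℝ) (hR : R.rank = p) :
    (A⁻¹ - Rᵀ * (R * A * Rᵀ)⁻¹ * R).PosSemidef := by
  set M := R * A * Rᵀ with hMdef
  -- rows of R are linearly independent
  have hli : LinearIndependent ℝ R.row := by
    rw [linearIndependent_iff_card_eq_finrank_span]
    rw [Set.finrank, ← R.rank_eq_finrank_span_row, hR, Fintype.card_fin]
  have hinj : Function.Injective R.vecMul := Matrix.vecMul_injective_iff.mpr hli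
  have hAt : Aᵀ = A := by rw [← conjTranspose_eq_transpose_of_trivial, hA.1.eq]
  -- M is positive definite
  have hM : M.PosDef := by
    refine Matrix.PosDef.of_dotProduct_mulVec_pos ?_ ?_
    · simp only [Matrix.IsHermitian, hMdef, conjTranspose_mul,
        conjTranspose_eq_transpose_of_trivial, transpose_mul, transpose_transpose,
        hAt, Matrix.mul_assoc]
    · intro x hx
      have hz : R.vecMul x ≠ 0 := by
        intro h
        exact hx (hinj (h.trans (Matrix.zero_vecMul R).symm))
      have := hA.dotProduct_mulVec_pos hz
      simpa [hMdef, star_trivial, ← Matrix.mulVec_mulVec, Matrix.dotProduct_mulVec,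
        Matrix.mulVec_transpose] using this
  have hAdet : IsUnit A.det := (Matrix.isUnit_iff_isUnit_det A).mp hA.isUnit
  have hMdet : IsUnit M.det := (Matrix.isUnit_iff_isUnit_det M).mp hM.isUnit
  set P := Rᵀ * M⁻¹ * R with hPdef
  have hPAP : P * A * P = P := by
    simp only [hPdef, Matrix.mul_assoc]
    rw [← Matrix.mul_assoc A Rᵀ, ← Matrix.mul_assoc R (A * Rᵀ), ← Matrix.mul_assoc R A Rᵀ,
      ← hMdef, ← Matrix.mul_assoc M⁻¹ M, Matrix.nonsing_inv_mul M hMdet, Matrix.one_mul]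
  have hC : (A⁻¹ - P) * A * (A⁻¹ - P) = A⁻¹ - P := by
    rw [Matrix.sub_mul, Matrix.nonsing_inv_mul A hAdet, Matrix.sub_mul, Matrix.mul_sub,
      Matrix.one_mul, Matrix.mul_sub, hPAP, Matrix.mul_assoc P A A⁻¹,
      Matrix.mul_nonsing_inv A hAdet, Matrix.mul_one, Matrix.one_mul]
    abel
  have hCH : (A⁻¹ - P)ᴴ = A⁻¹ - P := by
    rw [conjTranspose_sub, hA.inv.1.eq]
    congr 1
    have hMt : (M⁻¹)ᵀ = M⁻¹ := by rw [← conjTranspose_eq_transpose_of_trivial, hM.inv.1.eq]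
    simp only [hPdef, conjTranspose_mul, conjTranspose_eq_transpose_of_trivial,
      transpose_mul, transpose_transpose, hMt, Matrix.mul_assoc]
  have := hA.posSemidef.conjTranspose_mul_mul_same (A⁻¹ - P)
  rwa [hCH, hC] at this

private lemma quad_key {n p : ℕ}
    (A : Matrix (Fin n) (Fin n) ℝ) (hA : A.PosDef)
    (R : Matrix (Fin p) (Fin n) ℝ) (hR : R.rank = p) (v : Fin n → ℝ) :
    R.mulVec v ⬝ᵥ (R * A * Rᵀ)⁻¹.mulVec (R.mulVec v) ≤ v ⬝ᵥ A⁻¹.mulVec v := by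
  have h := (loewner_key A hA R hR).dotProduct_mulVec_nonneg v
  simp only [star_trivial, Matrix.sub_mulVec, dotProduct_sub] at h
  have e : v ⬝ᵥ (Rᵀ * (R * A * Rᵀ)⁻¹ * R).mulVec v
      = R.mulVec v ⬝ᵥ (R * A * Rᵀ)⁻¹.mulVec (R.mulVec v) := by
    rw [← Matrix.mulVec_mulVec, ← Matrix.mulVec_mulVec, Matrix.dotProduct_mulVec,
      Matrix.vecMul_transpose]
  linarith [e ▸ h]

/-- For a symmetric positive definite `A` and full-row-rank `R`,
`Rᵀ(RARᵀ)⁻¹R ⪯ A⁻¹` (both pointwise as quadratic forms and in the Loewner order);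
in particular the approximate decrement never exceeds the Newton decrement. -/
theorem approx_decrement_le_newton_decrement
    {n p : ℕ} (hp : p ≤ n)
    (A : Matrix (Fin n) (Fin n) ℝ) (hA : A.PosDef)
    (R : Matrix (Fin p) (Fin n) ℝ) (hR : R.rank = p)
    (f : EuclideanSpace ℝ (Fin n) → ℝ) (hf : ContDiff ℝ 2 f)
    (Hess : EuclideanSpace ℝ (Fin n) → Matrix (Fin n) (Fin n) ℝ)
    (hHess : ∀ y, HasFDerivAt (gradient f) (Matrix.toEuclideanCLM (𝕜 := ℝ) (Hess y)) y)
    (hPD : ∀ y, (Hess y).PosDef)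
    (x : EuclideanSpace ℝ (Fin n)) :
    (∀ v : Fin n → ℝ,
      R.mulVec v ⬝ᵥ (R * A * Rᵀ)⁻¹.mulVec (R.mulVec v) ≤ v ⬝ᵥ A⁻¹.mulVec v) ∧
    (A⁻¹ - Rᵀ * (R * A * Rᵀ)⁻¹ * R).PosSemidef ∧
    Real.sqrt (R.mulVec (fun i => gradient f x i) ⬝ᵥ
        (R * Hess x * Rᵀ)⁻¹.mulVec (R.mulVec fun i => gradient f x i)) ≤
      Real.sqrt ((fun i => gradient f x i) ⬝ᵥ (Hess x)⁻¹.mulVec fun i => gradient f x i) := by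
  refine ⟨fun v => quad_key A hA R hR v, loewner_key A hA R hR, ?_⟩
  exact Real.sqrt_le_sqrt (quad_key (Hess x) (hPD x) R hR _)

end
end

section
/- Let f : ℝⁿ → ℝ be twice continuously differentiable, μ-strongly convex with μ > 0, and with L-Lipschitz Hessian, L > 0, and let σ ∈ (0,1]. For each k ∈ ℕ, let R_k ∈ ℝ^{p_k×n} be a matrix with orthonormal rows (R_k R_kᵀ = I_{p_k}), and let the sequence (x_k) satisfy, for every k: x_{k+1} = x_k − R_kᵀ(R_k∇²f(x_k)R_kᵀ)⁻¹R_k∇f(x_k) and the acceptance condition ‖R_k∇f(x_{k+1})‖ ≥ σ‖∇f(x_{k+1})‖. Assume ∇f(x_k) ≠ 0 for all k and ‖∇f(x₀)‖ < 2σμ²/L. Then R_k∇f(x_k) ≠ 0 for all k, and, setting a_k := ‖R_k∇f(x_{k+1})‖ / ‖R_k∇f(x_k)‖, there exists K ∈ ℕ such that for all k ≥ K one has a_k < σ and ‖∇f(x_{k+1})‖ < ‖∇f(x_k)‖. -/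
open Matrix

noncomputable section

set_option maxHeartbeats 1600000

open scoped RealInnerProductSpace

namespace AML

variable {m n q : ℕ}

lemma el_mul (A : Matrix (Fin m) (Fin n) ℝ) (B : Matrix (Fin n) (Fin q) ℝ)
    (v : EuclideanSpace ℝ (Fin q)) :
    toEuclideanLin (A * B) v = toEuclideanLin A (toEuclideanLin B v) := by
  simp [toEuclideanLin_apply, Matrix.mulVec_mulVec]

lemma el_one (v : EuclideanSpace ℝ (Fin n)) :
    toEuclideanLin (1 : Matrix (Fin n) (Fin n) ℝ) v = v := by
  simp [toEuclideanLin_apply]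

lemma norm_el_le (A : Matrix (Fin m) (Fin n) ℝ) (v : EuclideanSpace ℝ (Fin n)) :
    ‖toEuclideanLin A v‖ ≤ A.specNorm * ‖v‖ :=
  (LinearMap.toContinuousLinearMap (toEuclideanLin A)).le_opNorm v

lemma inner_el_transpose (A : Matrix (Fin m) (Fin n) ℝ) (w : EuclideanSpace ℝ (Fin m))
    (v : EuclideanSpace ℝ (Fin n)) :
    ⟪toEuclideanLin Aᵀ w, v⟫ = ⟪w, toEuclideanLin A v⟫ := by
  have : Aᵀ = Aᴴ := by ext i j; simp [Matrix.conjTranspose, Matrix.map_apply]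
  rw [this, Matrix.toEuclideanLin_conjTranspose_eq_adjoint]
  exact LinearMap.adjoint_inner_left _ _ _

lemma el_clm (A : Matrix (Fin n) (Fin n) ℝ) (v : EuclideanSpace ℝ (Fin n)) :
    Matrix.toEuclideanCLM (𝕜 := ℝ) A v = toEuclideanLin A v := by
  rw [← Matrix.coe_toEuclideanCLM_eq_toEuclideanLin]; rfl

/-- strong convexity at the level of Euclidean linear maps -/
lemma mu_le_inner {H : Matrix (Fin n) (Fin n) ℝ} {μ : ℝ}
    (h : (H - μ • (1 : Matrix (Fin n) (Fin n) ℝ)).PosSemidef)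
    (v : EuclideanSpace ℝ (Fin n)) :
    μ * ‖v‖ ^ 2 ≤ ⟪v, toEuclideanLin H v⟫ := by
  have h2 := h.dotProduct_mulVec_nonneg (WithLp.equiv 2 (Fin n → ℝ) v)
  have hin : ⟪v, toEuclideanLin H v⟫ =
      dotProduct (star (WithLp.equiv 2 (Fin n → ℝ) v)) (H *ᵥ (WithLp.equiv 2 (Fin n → ℝ) v)) := by
    rw [EuclideanSpace.inner_eq_star_dotProduct, dotProduct_comm]
    rfl
  have hnorm : ‖v‖ ^ 2 =
      dotProduct (star (WithLp.equiv 2 (Fin n → ℝ) v)) (WithLp.equiv 2 (Fin n → ℝ) v) := by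
    rw [← real_inner_self_eq_norm_sq, EuclideanSpace.inner_eq_star_dotProduct, dotProduct_comm]
    rfl
  rw [Matrix.sub_mulVec, dotProduct_sub] at h2
  have : dotProduct (star (WithLp.equiv 2 (Fin n → ℝ) v)) ((μ • (1 : Matrix (Fin n) (Fin n) ℝ)) *ᵥ (WithLp.equiv 2 (Fin n → ℝ) v))
      = μ * dotProduct (star (WithLp.equiv 2 (Fin n → ℝ) v)) (WithLp.equiv 2 (Fin n → ℝ) v) := by
    rw [Matrix.smul_mulVec, Matrix.one_mulVec, dotProduct_smul]
    rfl
  rw [hin, hnorm]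
  linarith [h2, this.symm.le]

variable {pk : ℕ}

lemma norm_el_transpose {R : Matrix (Fin pk) (Fin n) ℝ} (h : R * Rᵀ = 1)
    (v : EuclideanSpace ℝ (Fin pk)) : ‖toEuclideanLin Rᵀ v‖ = ‖v‖ := by
  have key : ⟪toEuclideanLin Rᵀ v, toEuclideanLin Rᵀ v⟫ = ⟪v, v⟫ := by
    rw [inner_el_transpose, ← el_mul, h, el_one]
  have h1 : ‖toEuclideanLin Rᵀ v‖ ^ 2 = ‖v‖ ^ 2 := by
    rw [← real_inner_self_eq_norm_sq, ← real_inner_self_eq_norm_sq, key]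
  nlinarith [norm_nonneg (toEuclideanLin Rᵀ v), norm_nonneg v]

lemma norm_el_ortho_le {R : Matrix (Fin pk) (Fin n) ℝ} (h : R * Rᵀ = 1)
    (v : EuclideanSpace ℝ (Fin n)) : ‖toEuclideanLin R v‖ ≤ ‖v‖ := by
  set w := toEuclideanLin R v with hw
  have h1 : ‖w‖ ^ 2 = ⟪toEuclideanLin Rᵀ w, v⟫ := by
    rw [inner_el_transpose, ← hw, real_inner_self_eq_norm_sq]
  have h2 : ⟪toEuclideanLin Rᵀ w, v⟫ ≤ ‖w‖ * ‖v‖ := by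
    calc ⟪toEuclideanLin Rᵀ w, v⟫ ≤ ‖toEuclideanLin Rᵀ w‖ * ‖v‖ := real_inner_le_norm _ _
    _ = ‖w‖ * ‖v‖ := by rw [norm_el_transpose h]
  rcases eq_or_lt_of_le (norm_nonneg w) with h0 | h0
  · rw [← h0]; exact norm_nonneg v
  · nlinarith

-- invertibility from coercivity
lemma isUnit_det_of_coercive {B : Matrix (Fin pk) (Fin pk) ℝ} {μ : ℝ} (hμ : 0 < μ)
    (key : ∀ v : EuclideanSpace ℝ (Fin pk), μ * ‖v‖ ^ 2 ≤ ⟪v, toEuclideanLin B v⟫) :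
    IsUnit B.det := by
  by_contra hdet
  have : ∃ v ≠ 0, B *ᵥ v = 0 := (Matrix.exists_mulVec_eq_zero_iff).2 (by
    simpa [isUnit_iff_ne_zero] using hdet)
  obtain ⟨v, hv, hv0⟩ := this
  set ev : EuclideanSpace ℝ (Fin pk) := (WithLp.equiv 2 _).symm v with hev
  have hev0 : toEuclideanLin B ev = 0 := by
    rw [hev]; change WithLp.toLp 2 (B *ᵥ v) = 0; rw [hv0]; rfl
  have := key ev
  rw [hev0, inner_zero_right] at this
  have hevne : ev ≠ 0 := by
    simpa [hev] using hv
  have : ‖ev‖ ^ 2 ≤ 0 := by nlinarith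
  have := norm_pos_iff.2 hevne
  nlinarith

lemma norm_inv_apply_le {B : Matrix (Fin pk) (Fin pk) ℝ} {μ : ℝ} (hμ : 0 < μ)
    (key : ∀ v : EuclideanSpace ℝ (Fin pk), μ * ‖v‖ ^ 2 ≤ ⟪v, toEuclideanLin B v⟫)
    (w : EuclideanSpace ℝ (Fin pk)) :
    μ * ‖toEuclideanLin B⁻¹ w‖ ≤ ‖w‖ := by
  have hdet := isUnit_det_of_coercive hμ key
  set u := toEuclideanLin B⁻¹ w with hu
  have hBu : toEuclideanLin B u = w := by
    rw [hu, ← el_mul, Matrix.mul_nonsing_inv _ hdet, el_one]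
  have h1 := key u
  rw [hBu] at h1
  have h2 : ⟪u, w⟫ ≤ ‖u‖ * ‖w‖ := real_inner_le_norm _ _
  rcases eq_or_lt_of_le (norm_nonneg u) with h0 | h0
  · rw [← h0]; simpa using norm_nonneg w
  · nlinarith



lemma taylor_bound {n : ℕ} (f : EuclideanSpace ℝ (Fin n) → ℝ)
    (Hess : EuclideanSpace ℝ (Fin n) → Matrix (Fin n) (Fin n) ℝ)
    (hHess : ∀ y, HasFDerivAt (gradient f) (Matrix.toEuclideanCLM (𝕜 := ℝ) (Hess y)) y)
    {L : ℝ} (hL : 0 < L)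
    (hLip : ∀ y z, Matrix.specNorm (Hess y - Hess z) ≤ L * ‖y - z‖)
    (x d : EuclideanSpace ℝ (Fin n)) :
    ‖gradient f (x + d) - gradient f x - toEuclideanLin (Hess x) d‖ ≤ L / 2 * ‖d‖ ^ 2 := by
  set φ : ℝ → EuclideanSpace ℝ (Fin n) := fun t => gradient f (x + t • d) - t • (toEuclideanLin (Hess x) d) with hφ
  set φ' : ℝ → EuclideanSpace ℝ (Fin n) := fun t => toEuclideanLin (Hess (x + t • d)) d - toEuclideanLin (Hess x) d
    with hφ'
  have hderiv : ∀ t : ℝ, HasDerivAt φ (φ' t) t := by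
    intro t
    have h1 : HasDerivAt (fun t : ℝ => x + t • d) d t := by
      simpa using ((hasDerivAt_id t).smul_const d).const_add x
    have h2 : HasDerivAt (fun t : ℝ => gradient f (x + t • d))
        (Matrix.toEuclideanCLM (𝕜 := ℝ) (Hess (x + t • d)) d) t := by
      exact (hHess (x + t • d)).comp_hasDerivAt t h1
    rw [el_clm] at h2
    have h3 : HasDerivAt (fun t : ℝ => t • (toEuclideanLin (Hess x) d))
        (toEuclideanLin (Hess x) d) t := by
      simpa using (hasDerivAt_id t).smul_const (toEuclideanLin (Hess x) d)
    exact h2.sub h3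
  -- difference bound of the derivative-lipschitz part
  have hdiffnorm : ∀ a b : ℝ,
      ‖toEuclideanLin (Hess (x + a • d)) d - toEuclideanLin (Hess (x + b • d)) d‖
        ≤ L * ‖d‖ ^ 2 * |a - b| := by
    intro a b
    have he : toEuclideanLin (Hess (x + a • d)) d - toEuclideanLin (Hess (x + b • d)) d
        = toEuclideanLin (Hess (x + a • d) - Hess (x + b • d)) d := by
      rw [map_sub Matrix.toEuclideanLin, LinearMap.sub_apply]
    rw [he]
    calc ‖toEuclideanLin (Hess (x + a • d) - Hess (x + b • d)) d‖
        ≤ (Hess (x + a • d) - Hess (x + b • d)).specNorm * ‖d‖ := norm_el_le _ _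
      _ ≤ (L * ‖(x + a • d) - (x + b • d)‖) * ‖d‖ := by
          have := hLip (x + a • d) (x + b • d)
          exact mul_le_mul_of_nonneg_right this (norm_nonneg d)
      _ = L * ‖d‖ ^ 2 * |a - b| := by
          have : (x + a • d) - (x + b • d) = (a - b) • d := by
            module
          rw [this, norm_smul, Real.norm_eq_abs]
          ring
  have hcont : Continuous φ' := by
    rw [hφ']
    have : LipschitzWith (Real.toNNReal (L * ‖d‖ ^ 2))
        (fun t : ℝ => toEuclideanLin (Hess (x + t • d)) d) := by
      apply LipschitzWith.of_dist_le_mul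
      intro a b
      rw [dist_eq_norm, dist_eq_norm]
      have hn : 0 ≤ L * ‖d‖ ^ 2 := by positivity
      rw [Real.coe_toNNReal _ hn]
      simpa [Real.norm_eq_abs] using hdiffnorm a b
    exact this.continuous.sub continuous_const
  have hint : IntervalIntegrable φ' MeasureTheory.volume 0 1 :=
    hcont.intervalIntegrable 0 1
  have hFTC : ∫ t in (0:ℝ)..1, φ' t = φ 1 - φ 0 :=
    intervalIntegral.integral_eq_sub_of_hasDerivAt (fun t _ => hderiv t) hint
  have hval : φ 1 - φ 0 = gradient f (x + d) - gradient f x - toEuclideanLin (Hess x) d := by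
    simp only [hφ, one_smul, zero_smul, sub_zero]
    abel
  have hbound : ‖∫ t in (0:ℝ)..1, φ' t‖ ≤ |∫ t in (0:ℝ)..1, L * ‖d‖ ^ 2 * t| := by
    apply intervalIntegral.norm_integral_le_abs_of_norm_le
    · filter_upwards [MeasureTheory.ae_restrict_mem measurableSet_uIoc] with t ht
      rw [Set.uIoc_of_le (by norm_num : (0:ℝ) ≤ 1)] at ht
      have ht0 : 0 < t := ht.1
      have h5 := hdiffnorm t 0
      simp only [zero_smul, add_zero] at h5
      calc ‖φ' t‖ ≤ L * ‖d‖ ^ 2 * |t - 0| := h5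
        _ = L * ‖d‖ ^ 2 * t := by rw [sub_zero, abs_of_pos ht0]
    · exact (continuous_const.mul continuous_id).intervalIntegrable 0 1
  have hcalc : ∫ t in (0:ℝ)..1, L * ‖d‖ ^ 2 * t = L / 2 * ‖d‖ ^ 2 := by
    rw [intervalIntegral.integral_const_mul, integral_id]
    ring
  rw [hFTC, hval, hcalc, abs_of_nonneg (by positivity)] at hbound
  exact hbound

end AML


open AML in
/-- Theorem 4.4. For the adaptive multilevel Newton iteration with
orthonormal-row restrictions, started with `‖∇f(x₀)‖ < 2σμ²/L`, the reduced gradients never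
vanish and eventually the reduction ratios drop below `σ` while the gradient norms strictly
decrease. -/
theorem aml_newton_eventually_quadratic
    {n : ℕ}
    (f : EuclideanSpace ℝ (Fin n) → ℝ)
    (hf : ContDiff ℝ 2 f)
    (Hess : EuclideanSpace ℝ (Fin n) → Matrix (Fin n) (Fin n) ℝ)
    (hHess : ∀ y, HasFDerivAt (gradient f) (Matrix.toEuclideanCLM (𝕜 := ℝ) (Hess y)) y)
    (μ L : ℝ) (hμ : 0 < μ) (hL : 0 < L)
    (hsc : ∀ y, (Hess y - μ • (1 : Matrix (Fin n) (Fin n) ℝ)).PosSemidef)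
    (hLip : ∀ y z, Matrix.specNorm (Hess y - Hess z) ≤ L * ‖y - z‖)
    (σ : ℝ) (hσ0 : 0 < σ) (hσ1 : σ ≤ 1)
    (p : ℕ → ℕ) (R : ∀ k, Matrix (Fin (p k)) (Fin n) ℝ)
    (hortho : ∀ k, R k * (R k)ᵀ = 1)
    (x : ℕ → EuclideanSpace ℝ (Fin n))
    (hstep : ∀ k, x (k + 1) = x k -
      Matrix.toEuclideanLin ((R k)ᵀ * (R k * Hess (x k) * (R k)ᵀ)⁻¹ * R k) (gradient f (x k)))
    (hacc : ∀ k, σ * ‖gradient f (x (k + 1))‖ ≤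
      ‖Matrix.toEuclideanLin (R k) (gradient f (x (k + 1)))‖)
    (hnz : ∀ k, gradient f (x k) ≠ 0)
    (h0 : ‖gradient f (x 0)‖ < 2 * σ * μ ^ 2 / L) :
    (∀ k, Matrix.toEuclideanLin (R k) (gradient f (x k)) ≠ 0) ∧
    ∃ K : ℕ, ∀ k ≥ K,
      ‖Matrix.toEuclideanLin (R k) (gradient f (x (k + 1)))‖ /
          ‖Matrix.toEuclideanLin (R k) (gradient f (x k))‖ < σ ∧
      ‖gradient f (x (k + 1))‖ < ‖gradient f (x k)‖ := by
  set g : ℕ → EuclideanSpace ℝ (Fin n) := fun k => gradient f (x k) with hg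
  set B : ∀ k, Matrix (Fin (p k)) (Fin (p k)) ℝ :=
    fun k => R k * Hess (x k) * (R k)ᵀ with hB
  -- coercivity of the reduced Hessian
  have hcoerce : ∀ k (v : EuclideanSpace ℝ (Fin (p k))),
      μ * ‖v‖ ^ 2 ≤ ⟪v, toEuclideanLin (B k) v⟫ := by
    intro k v
    rw [hB]
    rw [el_mul, el_mul]
    calc μ * ‖v‖ ^ 2 = μ * ‖toEuclideanLin (R k)ᵀ v‖ ^ 2 := by
          rw [norm_el_transpose (hortho k)]
      _ ≤ ⟪toEuclideanLin (R k)ᵀ v, toEuclideanLin (Hess (x k)) (toEuclideanLin (R k)ᵀ v)⟫ :=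
          mu_le_inner (hsc (x k)) _
      _ = ⟪v, toEuclideanLin (R k) (toEuclideanLin (Hess (x k)) (toEuclideanLin (R k)ᵀ v))⟫ :=
          inner_el_transpose (R k) v _
  have hdet : ∀ k, IsUnit (B k).det := fun k => isUnit_det_of_coercive hμ (hcoerce k)
  -- the displacement
  set d : ℕ → EuclideanSpace ℝ (Fin n) :=
    fun k => -(toEuclideanLin ((R k)ᵀ * (B k)⁻¹ * R k) (g k)) with hd
  have hstep' : ∀ k, x (k + 1) = x k + d k := by
    intro k; rw [hstep k, sub_eq_add_neg, hd]
  have hd_split : ∀ k, toEuclideanLin ((R k)ᵀ * (B k)⁻¹ * R k) (g k)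
      = toEuclideanLin (R k)ᵀ (toEuclideanLin (B k)⁻¹ (toEuclideanLin (R k) (g k))) := by
    intro k
    rw [Matrix.mul_assoc, el_mul, el_mul]
  -- Part 1 : reduced gradients never vanish
  have hRnz : ∀ k, toEuclideanLin (R k) (g k) ≠ 0 := by
    intro k hzero
    have hd0 : d k = 0 := by
      rw [hd]
      simp only []
      rw [hd_split k, hzero]
      simp
    have hxx : x (k + 1) = x k := by rw [hstep' k, hd0, add_zero]
    have h1 := hacc k
    rw [hxx, (show gradient f (x k) = g k from rfl), hzero] at h1
    simp only [norm_zero] at h1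
    have h9 : 0 < ‖g k‖ := norm_pos_iff.2 (hnz k)
    nlinarith
  -- the Taylor remainder bound for each step
  have hgpos : ∀ k, 0 < ‖g k‖ := fun k => norm_pos_iff.2 (hnz k)
  have hRpos : ∀ k, 0 < ‖toEuclideanLin (R k) (g k)‖ := fun k => norm_pos_iff.2 (hRnz k)
  -- key inequality : 2 μ² ‖R g_{k+1}‖ ≤ L ‖R g_k‖²
  have keyineq : ∀ k, 2 * μ ^ 2 * ‖toEuclideanLin (R k) (g (k + 1))‖
      ≤ L * ‖toEuclideanLin (R k) (g k)‖ ^ 2 := by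
    intro k
    set r : EuclideanSpace ℝ (Fin n) :=
      gradient f (x k + d k) - gradient f (x k) - toEuclideanLin (Hess (x k)) (d k) with hr
    have htay : ‖r‖ ≤ L / 2 * ‖d k‖ ^ 2 := taylor_bound f Hess hHess hL hLip (x k) (d k)
    -- ‖d k‖ bound
    have hdnorm : μ * ‖d k‖ ≤ ‖toEuclideanLin (R k) (g k)‖ := by
      rw [hd]
      simp only []
      rw [norm_neg, hd_split k, norm_el_transpose (hortho k)]
      exact norm_inv_apply_le hμ (hcoerce k) _
    -- R g_{k+1} = R r
    have hcancel : toEuclideanLin (R k) (toEuclideanLin (Hess (x k)) (d k))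
        = -(toEuclideanLin (R k) (g k)) := by
      rw [hd]
      simp only []
      rw [map_neg, map_neg, hd_split k, ← el_mul (Hess (x k)),
        ← el_mul (R k), ← Matrix.mul_assoc,
        (show R k * Hess (x k) * (R k)ᵀ = B k from rfl), ← el_mul,
        Matrix.mul_nonsing_inv _ (hdet k), el_one]
    have hgsucc : g (k + 1) = r + g k + toEuclideanLin (Hess (x k)) (d k) := by
      rw [hg]; simp only []
      rw [hstep' k, hr]
      abel
    have hRr : toEuclideanLin (R k) (g (k + 1)) = toEuclideanLin (R k) r := by
      rw [hgsucc, map_add, map_add, hcancel]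
      abel
    have hRrle : ‖toEuclideanLin (R k) (g (k + 1))‖ ≤ L / 2 * ‖d k‖ ^ 2 := by
      rw [hRr]
      exact le_trans (norm_el_ortho_le (hortho k) r) htay
    nlinarith [norm_nonneg (d k), norm_nonneg (toEuclideanLin (R k) (g k)),
      mul_self_le_mul_self (by positivity : (0:ℝ) ≤ μ * ‖d k‖) hdnorm]
  have hRle : ∀ k, ‖toEuclideanLin (R k) (g k)‖ ≤ ‖g k‖ :=
    fun k => norm_el_ortho_le (hortho k) _
  -- gradients stay small and decrease
  have hsmall : ∀ k, L * ‖g k‖ < 2 * σ * μ ^ 2 := by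
    intro k
    induction k with
    | zero =>
      have := (lt_div_iff₀ hL).mp h0
      linarith
    | succ k ih =>
      have h1 := hacc k
      rw [(show gradient f (x (k+1)) = g (k+1) from rfl)] at h1
      have h2 := keyineq k
      have h3 := hRle k
      have h5 := hgpos k
      have h6 := hgpos (k + 1)
      have h7 := hRpos k
      have e1 : 2*μ^2*(σ*‖g (k+1)‖) ≤ 2*μ^2*‖toEuclideanLin (R k) (g (k+1))‖ :=
        mul_le_mul_of_nonneg_left h1 (by positivity)
      have e2 : L*(‖toEuclideanLin (R k) (g k)‖*‖toEuclideanLin (R k) (g k)‖)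
          ≤ L*(‖g k‖*‖g k‖) :=
        mul_le_mul_of_nonneg_left (mul_self_le_mul_self h7.le h3) hL.le
      have e3 : L*‖g k‖*‖g k‖ < 2*σ*μ^2*‖g k‖ := mul_lt_mul_of_pos_right ih h5
      have e4 : 2*σ*μ^2*‖g (k+1)‖ < 2*σ*μ^2*‖g k‖ := by nlinarith
      have h10 : ‖g (k+1)‖ < ‖g k‖ :=
        lt_of_mul_lt_mul_left e4 (by positivity)
      have := mul_lt_mul_of_pos_left h10 hL
      linarith
  have hdec : ∀ k, ‖g (k + 1)‖ < ‖g k‖ := by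
    intro k
    have h1 := hacc k
    rw [(show gradient f (x (k+1)) = g (k+1) from rfl)] at h1
    have h2 := keyineq k
    have h3 := hRle k
    have h5 := hgpos k
    have h6 := hgpos (k + 1)
    have h7 := hRpos k
    have h8 := hsmall k
    have e1 : 2*μ^2*(σ*‖g (k+1)‖) ≤ 2*μ^2*‖toEuclideanLin (R k) (g (k+1))‖ :=
      mul_le_mul_of_nonneg_left h1 (by positivity)
    have e2 : L*(‖toEuclideanLin (R k) (g k)‖*‖toEuclideanLin (R k) (g k)‖)
        ≤ L*(‖g k‖*‖g k‖) :=
      mul_le_mul_of_nonneg_left (mul_self_le_mul_self h7.le h3) hL.le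
    have e3 : L*‖g k‖*‖g k‖ < 2*σ*μ^2*‖g k‖ := mul_lt_mul_of_pos_right h8 h5
    have e4 : 2*σ*μ^2*‖g (k+1)‖ < 2*σ*μ^2*‖g k‖ := by nlinarith
    exact lt_of_mul_lt_mul_left e4 (by positivity)
  refine ⟨hRnz, 0, fun k _ => ⟨?_, hdec k⟩⟩
  rw [div_lt_iff₀ (hRpos k)]
  have h2 := keyineq k
  have h3 := hRle k
  have h7 := hRpos k
  have h8 := hsmall k
  have h5 := hgpos k
  have e2 : L*(‖toEuclideanLin (R k) (g k)‖*‖toEuclideanLin (R k) (g k)‖)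
      ≤ L*(‖g k‖*‖toEuclideanLin (R k) (g k)‖) :=
    mul_le_mul_of_nonneg_left (mul_le_mul_of_nonneg_right h3 h7.le) hL.le
  have e3 : L*‖g k‖*‖toEuclideanLin (R k) (g k)‖
      < 2*σ*μ^2*‖toEuclideanLin (R k) (g k)‖ := mul_lt_mul_of_pos_right h8 h7
  have e4 : 2*μ^2*‖toEuclideanLin (R k) (g (k+1))‖
      < 2*μ^2*(σ*‖toEuclideanLin (R k) (g k)‖) := by nlinarith
  exact lt_of_mul_lt_mul_left e4 (by positivity)

end
end

section
/- Let f : ℝⁿ → ℝ be twice continuously differentiable, μ-strongly convex with μ > 0, and with L-Lipschitz Hessian, L > 0. Let ε ∈ (0, 1/2) and let R ∈ ℝ^{p×n} have full row rank p ≤ n with P := Rᵀ, such that all singular values of P lie in the interval [1 − ε, 1 + ε]. Let x⁺ := x − P(R∇²f(x)P)⁻¹R∇f(x) be the coarse step at x ∈ ℝⁿ, and suppose ‖R∇f(x⁺)‖ ≥ (1 − ε)‖∇f(x⁺)‖. Then ‖∇f(x⁺)‖ ≤ (L/(2μ²)) ((1 + ε)/(1 − ε))⁵ ‖∇f(x)‖².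 -/
open Matrix

noncomputable section

open RealInnerProductSpace

namespace JLaux

lemma dot_mulVec_eq {k m : ℕ} (A : Matrix (Fin m) (Fin k) ℝ) (v : Fin k → ℝ) (u : Fin m → ℝ) :
    (A *ᵥ v) ⬝ᵥ u = v ⬝ᵥ (Aᵀ *ᵥ u) := by
  rw [dotProduct_comm, dotProduct_mulVec, ← mulVec_transpose, dotProduct_comm]

lemma inner_ES {k : ℕ} (u v : EuclideanSpace ℝ (Fin k)) :
    ⟪u, v⟫ = (WithLp.equiv 2 _ u) ⬝ᵥ (WithLp.equiv 2 _ v) := by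
  simp [PiLp.inner_apply, dotProduct, mul_comm]

lemma norm_sq_ES {k : ℕ} (u : EuclideanSpace ℝ (Fin k)) :
    ‖u‖ ^ 2 = (WithLp.equiv 2 _ u) ⬝ᵥ (WithLp.equiv 2 _ u) := by
  rw [← real_inner_self_eq_norm_sq, inner_ES]

lemma toEL_apply {k m : ℕ} (A : Matrix (Fin m) (Fin k) ℝ) (v : EuclideanSpace ℝ (Fin k)) :
    WithLp.equiv 2 _ (toEuclideanLin A v) = A *ᵥ (WithLp.equiv 2 _ v) := rfl

lemma toEL_mul {k l m : ℕ} (A : Matrix (Fin m) (Fin l) ℝ) (B : Matrix (Fin l) (Fin k) ℝ)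
    (v : EuclideanSpace ℝ (Fin k)) :
    toEuclideanLin (A * B) v = toEuclideanLin A (toEuclideanLin B v) := by
  apply (WithLp.equiv 2 _).injective
  simp [toEL_apply, mulVec_mulVec]

lemma toEL_one {k : ℕ} (v : EuclideanSpace ℝ (Fin k)) :
    toEuclideanLin (1 : Matrix (Fin k) (Fin k) ℝ) v = v := by
  apply (WithLp.equiv 2 _).injective
  simp [toEL_apply]

lemma toCLM_apply {k : ℕ} (A : Matrix (Fin k) (Fin k) ℝ) (v : EuclideanSpace ℝ (Fin k)) :
    Matrix.toEuclideanCLM (𝕜 := ℝ) A v = toEuclideanLin A v := rfl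

lemma specNorm_bound {k m : ℕ} (A : Matrix (Fin m) (Fin k) ℝ) (v : EuclideanSpace ℝ (Fin k)) :
    ‖toEuclideanLin A v‖ ≤ A.specNorm * ‖v‖ := by
  simpa [Matrix.specNorm] using (LinearMap.toContinuousLinearMap (toEuclideanLin A)).le_opNorm v

lemma quad_nonneg {k : ℕ} {B : Matrix (Fin k) (Fin k) ℝ} (hB : B.PosSemidef)
    (u : EuclideanSpace ℝ (Fin k)) : 0 ≤ ⟪toEuclideanLin B u, u⟫ := by
  rw [inner_ES, toEL_apply]
  simpa [dotProduct_comm] using hB.dotProduct_mulVec_nonneg (WithLp.equiv 2 _ u)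

lemma psd_sub_smul {k : ℕ} {A : Matrix (Fin k) (Fin k) ℝ} (hA : A.IsHermitian) {c : ℝ}
    (h : ∀ i, c ≤ hA.eigenvalues i) : (A - c • 1).PosSemidef := by
  have hU : (hA.eigenvectorUnitary : Matrix (Fin k) (Fin k) ℝ) *
      star (hA.eigenvectorUnitary : Matrix (Fin k) (Fin k) ℝ) = 1 :=
    Matrix.mem_unitaryGroup_iff.mp hA.eigenvectorUnitary.2
  have key : A - c • 1 = (hA.eigenvectorUnitary : Matrix (Fin k) (Fin k) ℝ) *
      (diagonal (fun i => hA.eigenvalues i - c)) *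
      (hA.eigenvectorUnitary : Matrix (Fin k) (Fin k) ℝ)ᴴ := by
    conv_lhs => rw [hA.spectral_theorem]
    rw [← Matrix.star_eq_conjTranspose]
    have : (diagonal (fun i => hA.eigenvalues i - c)) =
        diagonal (RCLike.ofReal ∘ hA.eigenvalues) - c • 1 := by
      simp [← Matrix.diagonal_smul, Matrix.smul_one_eq_diagonal, ← Matrix.diagonal_sub]
    rw [this]
    simp only [Matrix.mul_sub, Matrix.sub_mul, Matrix.mul_smul, Matrix.smul_mul, Matrix.mul_one, hU,
      Unitary.conjStarAlgAut_apply]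
  rw [key]
  exact (Matrix.PosSemidef.diagonal (fun i => by simpa using h i)).mul_mul_conjTranspose_same _

lemma psd_smul_sub {k : ℕ} {A : Matrix (Fin k) (Fin k) ℝ} (hA : A.IsHermitian) {c : ℝ}
    (h : ∀ i, hA.eigenvalues i ≤ c) : (c • 1 - A).PosSemidef := by
  have hU : (hA.eigenvectorUnitary : Matrix (Fin k) (Fin k) ℝ) *
      star (hA.eigenvectorUnitary : Matrix (Fin k) (Fin k) ℝ) = 1 :=
    Matrix.mem_unitaryGroup_iff.mp hA.eigenvectorUnitary.2
  have key : c • 1 - A = (hA.eigenvectorUnitary : Matrix (Fin k) (Fin k) ℝ) *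
      (diagonal (fun i => c - hA.eigenvalues i)) *
      (hA.eigenvectorUnitary : Matrix (Fin k) (Fin k) ℝ)ᴴ := by
    conv_lhs => rw [hA.spectral_theorem]
    rw [← Matrix.star_eq_conjTranspose]
    have : (diagonal (fun i => c - hA.eigenvalues i)) =
        c • 1 - diagonal (RCLike.ofReal ∘ hA.eigenvalues) := by
      simp [← Matrix.diagonal_smul, Matrix.smul_one_eq_diagonal, ← Matrix.diagonal_sub]
    rw [this]
    simp only [Matrix.mul_sub, Matrix.sub_mul, Matrix.mul_smul, Matrix.smul_mul, Matrix.mul_one, hU,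
      Unitary.conjStarAlgAut_apply]
  rw [key]
  exact (Matrix.PosSemidef.diagonal (fun i => by simpa using h i)).mul_mul_conjTranspose_same _

lemma toEL_sub_smul_one {k : ℕ} (A : Matrix (Fin k) (Fin k) ℝ) (c : ℝ)
    (u : EuclideanSpace ℝ (Fin k)) :
    toEuclideanLin (A - c • 1) u = toEuclideanLin A u - c • u := by
  apply (WithLp.equiv 2 _).injective
  simp [toEL_apply, sub_mulVec, smul_mulVec]

lemma toEL_smul_one_sub {k : ℕ} (A : Matrix (Fin k) (Fin k) ℝ) (c : ℝ)
    (u : EuclideanSpace ℝ (Fin k)) :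
    toEuclideanLin (c • 1 - A) u = c • u - toEuclideanLin A u := by
  apply (WithLp.equiv 2 _).injective
  simp [toEL_apply, sub_mulVec, smul_mulVec]

end JLaux

namespace JLaux

lemma le_of_sq_le' {a b : ℝ} (ha : 0 ≤ a) (hb : 0 ≤ b) (h : a ^ 2 ≤ b ^ 2) : a ≤ b := by
  nlinarith

open RealInnerProductSpace in
lemma posDef_of_quad {k : ℕ} {B : Matrix (Fin k) (Fin k) ℝ} (hB : B.IsHermitian) {c : ℝ}
    (hc : 0 < c)
    (h : ∀ u : EuclideanSpace ℝ (Fin k), c * ‖u‖ ^ 2 ≤ ⟪toEuclideanLin B u, u⟫) : B.PosDef := by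
  refine posDef_iff_dotProduct_mulVec.mpr ⟨hB, fun u hu => ?_⟩
  have h1 := h ((WithLp.equiv 2 (Fin k → ℝ)).symm u)
  rw [inner_ES, toEL_apply, norm_sq_ES] at h1
  have hdot : 0 < u ⬝ᵥ u := by
    rcases (Finset.sum_nonneg fun i _ => mul_self_nonneg (u i) : 0 ≤ u ⬝ᵥ u).eq_or_lt with h' | h'
    · exact absurd (dotProduct_self_eq_zero.mp h'.symm) hu
    · exact h'
  have h2 : star u ⬝ᵥ (B *ᵥ u) = (B *ᵥ u) ⬝ᵥ u := by
    rw [dotProduct_comm]; simp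
  rw [h2]
  calc (0:ℝ) < c * (u ⬝ᵥ u) := mul_pos hc hdot
    _ ≤ _ := h1

end JLaux
open RealInnerProductSpace in
lemma JLaux.taylor_bound {n : ℕ} (f : EuclideanSpace ℝ (Fin n) → ℝ)
    (Hess : EuclideanSpace ℝ (Fin n) → Matrix (Fin n) (Fin n) ℝ)
    (hHess : ∀ y, HasFDerivAt (gradient f) (Matrix.toEuclideanCLM (𝕜 := ℝ) (Hess y)) y)
    (L : ℝ) (hL : 0 < L)
    (hLip : ∀ y z, Matrix.specNorm (Hess y - Hess z) ≤ L * ‖y - z‖)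
    (x s : EuclideanSpace ℝ (Fin n)) :
    ‖gradient f (x + s) - gradient f x - Matrix.toEuclideanLin (Hess x) s‖
      ≤ L / 2 * ‖s‖ ^ 2 := by
  have hderiv : ∀ t : ℝ, HasDerivAt
      (fun t : ℝ => gradient f (x + t • s) - gradient f x
        - t • (Matrix.toEuclideanLin (Hess x) s))
      (Matrix.toEuclideanCLM (𝕜 := ℝ) (Hess (x + t • s)) s
        - Matrix.toEuclideanLin (Hess x) s) t := by
    intro t
    have h1 : HasDerivAt (fun t : ℝ => x + t • s) s t := by
      simpa using ((hasDerivAt_id t).smul_const s).const_add x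
    have h2 := (hHess (x + t • s)).comp_hasDerivAt t h1
    have h3 : HasDerivAt (fun t : ℝ => gradient f x + t • (Matrix.toEuclideanLin (Hess x) s))
        (Matrix.toEuclideanLin (Hess x) s) t := by
      simpa using
        ((hasDerivAt_id t).smul_const (Matrix.toEuclideanLin (Hess x) s)).const_add (gradient f x)
    have h4 := h2.sub h3
    simpa [Function.comp, sub_sub, Pi.sub_def] using h4
  have hbound : ∀ t ∈ Set.Ico (0:ℝ) 1,
      ‖Matrix.toEuclideanCLM (𝕜 := ℝ) (Hess (x + t • s)) s
        - Matrix.toEuclideanLin (Hess x) s‖ ≤ (L * ‖s‖ ^ 2) * t := by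
    intro t ht
    have h1 : Matrix.toEuclideanCLM (𝕜 := ℝ) (Hess (x + t • s)) s
        - Matrix.toEuclideanLin (Hess x) s
        = Matrix.toEuclideanLin (Hess (x + t • s) - Hess x) s := by
      have h0 : Matrix.toEuclideanLin (Hess (x + t • s) - Hess x)
          = Matrix.toEuclideanLin (Hess (x + t • s)) - Matrix.toEuclideanLin (Hess x) :=
        map_sub _ _ _
      rw [JLaux.toCLM_apply, h0, LinearMap.sub_apply]
    rw [h1]
    calc ‖Matrix.toEuclideanLin (Hess (x + t • s) - Hess x) s‖
        ≤ Matrix.specNorm (Hess (x + t • s) - Hess x) * ‖s‖ := JLaux.specNorm_bound _ _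
      _ ≤ (L * ‖x + t • s - x‖) * ‖s‖ := mul_le_mul_of_nonneg_right (hLip _ _) (norm_nonneg s)
      _ = (L * ‖s‖ ^ 2) * t := by
          rw [add_sub_cancel_left, norm_smul, Real.norm_eq_abs, abs_of_nonneg ht.1]; ring
  have hB : ∀ t : ℝ, HasDerivAt (fun t : ℝ => L * ‖s‖ ^ 2 / 2 * t ^ 2) ((L * ‖s‖ ^ 2) * t) t := by
    intro t
    have h := (hasDerivAt_pow 2 t).const_mul (L * ‖s‖ ^ 2 / 2)
    refine h.congr_deriv ?_
    norm_num
    ring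
  have key := image_norm_le_of_norm_deriv_right_le_deriv_boundary
    (a := 0) (b := 1)
    (fun t _ => (hderiv t).continuousAt.continuousWithinAt)
    (fun t _ => (hderiv t).hasDerivWithinAt)
    (by simp : ‖gradient f (x + (0:ℝ) • s) - gradient f x
      - (0:ℝ) • (Matrix.toEuclideanLin (Hess x) s)‖ ≤ L * ‖s‖ ^ 2 / 2 * (0:ℝ) ^ 2)
    hB hbound
  have h1 := key (Set.right_mem_Icc.mpr zero_le_one)
  have h2 : ‖gradient f (x + s) - gradient f x - Matrix.toEuclideanLin (Hess x) s‖
      ≤ L * ‖s‖ ^ 2 / 2 := by simpa using h1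
  linarith

set_option maxHeartbeats 2000000 in
/-- Johnson–Lindenstrauss-type step bound: if all singular values of
`P = Rᵀ` lie in `[1−ε, 1+ε]` and the acceptance condition holds with `σ = 1−ε`, then
`‖∇f(x⁺)‖ ≤ (L/(2μ²)) ((1+ε)/(1−ε))⁵ ‖∇f(x)‖²`. -/
theorem jl_coarse_step_quadratic_bound
    {n p : ℕ} (hp : p ≤ n)
    (f : EuclideanSpace ℝ (Fin n) → ℝ)
    (hf : ContDiff ℝ 2 f)
    (Hess : EuclideanSpace ℝ (Fin n) → Matrix (Fin n) (Fin n) ℝ)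
    (hHess : ∀ y, HasFDerivAt (gradient f) (Matrix.toEuclideanCLM (𝕜 := ℝ) (Hess y)) y)
    (μ L : ℝ) (hμ : 0 < μ) (hL : 0 < L)
    (hsc : ∀ y, (Hess y - μ • (1 : Matrix (Fin n) (Fin n) ℝ)).PosSemidef)
    (hLip : ∀ y z, Matrix.specNorm (Hess y - Hess z) ≤ L * ‖y - z‖)
    (ε : ℝ) (hε0 : 0 < ε) (hε1 : ε < 1 / 2)
    (R : Matrix (Fin p) (Fin n) ℝ) (hR : R.rank = p)
    (hsv : ∀ i, R.singularValueT i ∈ Set.Icc (1 - ε) (1 + ε))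
    (x xp : EuclideanSpace ℝ (Fin n))
    (hxp : xp = x - Matrix.toEuclideanLin (Rᵀ * (R * Hess x * Rᵀ)⁻¹ * R) (gradient f x))
    (hacc : (1 - ε) * ‖gradient f xp‖ ≤ ‖Matrix.toEuclideanLin R (gradient f xp)‖) :
    ‖gradient f xp‖ ≤ L / (2 * μ ^ 2) * ((1 + ε) / (1 - ε)) ^ 5 * ‖gradient f x‖ ^ 2 := by
  classical
  have ha : (0:ℝ) < 1 - ε := by linarith
  have hb : (0:ℝ) < 1 + ε := by linarith
  -- conjTranspose = transpose over ℝ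
  have hCT : ∀ {a b : ℕ} (A : Matrix (Fin a) (Fin b) ℝ), Aᴴ = Aᵀ := by
    intro a b A; ext i j; simp [Matrix.conjTranspose_apply]
  -- H is Hermitian
  have hHerm : (Hess x).IsHermitian := by
    have h1 := (hsc x).1
    have h2 : (μ • (1 : Matrix (Fin n) (Fin n) ℝ)).IsHermitian := by
      simp [Matrix.IsHermitian, Matrix.conjTranspose_smul]
    simpa using h1.add h2
  -- strong convexity quadratic bound
  have hquadH : ∀ y (v : EuclideanSpace ℝ (Fin n)),
      μ * ‖v‖ ^ 2 ≤ ⟪Matrix.toEuclideanLin (Hess y) v, v⟫ := by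
    intro y v
    have h0 := JLaux.quad_nonneg (hsc y) v
    rw [JLaux.toEL_sub_smul_one, inner_sub_left, real_inner_smul_left,
      real_inner_self_eq_norm_sq] at h0
    linarith
  -- eigenvalue bounds for R Rᴴ
  have hsv2 : ∀ i, (1 - ε) ^ 2 ≤ (Matrix.isHermitian_mul_conjTranspose_self R).eigenvalues i ∧
      (Matrix.isHermitian_mul_conjTranspose_self R).eigenvalues i ≤ (1 + ε) ^ 2 := by
    intro i
    obtain ⟨h1, h2⟩ := hsv i
    have h0 : 0 ≤ (Matrix.isHermitian_mul_conjTranspose_self R).eigenvalues i :=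
      (Matrix.posSemidef_self_mul_conjTranspose R).eigenvalues_nonneg i
    rw [Matrix.singularValueT] at h1 h2
    constructor <;> nlinarith [Real.sq_sqrt h0, Real.sqrt_nonneg
      ((Matrix.isHermitian_mul_conjTranspose_self R).eigenvalues i)]
  have hPSD1 : (R * Rᴴ - ((1 - ε) ^ 2) • 1).PosSemidef :=
    JLaux.psd_sub_smul (Matrix.isHermitian_mul_conjTranspose_self R) fun i => (hsv2 i).1
  have hPSD2 : (((1 + ε) ^ 2) • 1 - R * Rᴴ).PosSemidef :=
    JLaux.psd_smul_sub (Matrix.isHermitian_mul_conjTranspose_self R) fun i => (hsv2 i).2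
  -- quadratic form of R Rᵀ in Euclidean space
  have hPnorm : ∀ u : EuclideanSpace ℝ (Fin p),
      ‖Matrix.toEuclideanLin Rᵀ u‖ ^ 2 = ⟪Matrix.toEuclideanLin (R * Rᴴ) u, u⟫ := by
    intro u
    rw [JLaux.norm_sq_ES, JLaux.inner_ES, JLaux.toEL_apply, JLaux.toEL_apply, hCT R]
    rw [JLaux.dot_mulVec_eq, Matrix.transpose_transpose, Matrix.mulVec_mulVec]
    rw [dotProduct_comm]
  have hPu_up : ∀ u : EuclideanSpace ℝ (Fin p),
      ‖Matrix.toEuclideanLin Rᵀ u‖ ≤ (1 + ε) * ‖u‖ := by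
    intro u
    have h0 := JLaux.quad_nonneg hPSD2 u
    rw [JLaux.toEL_smul_one_sub, inner_sub_left, real_inner_smul_left,
      real_inner_self_eq_norm_sq, ← hPnorm u] at h0
    refine JLaux.le_of_sq_le' (norm_nonneg _) (mul_nonneg hb.le (norm_nonneg u)) ?_
    nlinarith [h0]
  have hPu_lo : ∀ u : EuclideanSpace ℝ (Fin p),
      (1 - ε) * ‖u‖ ≤ ‖Matrix.toEuclideanLin Rᵀ u‖ := by
    intro u
    have h0 := JLaux.quad_nonneg hPSD1 u
    rw [JLaux.toEL_sub_smul_one, inner_sub_left, real_inner_smul_left,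
      real_inner_self_eq_norm_sq, ← hPnorm u] at h0
    refine JLaux.le_of_sq_le' (mul_nonneg ha.le (norm_nonneg u)) (norm_nonneg _) ?_
    nlinarith [h0]
  -- upper bound for R itself
  have hR_up : ∀ v : EuclideanSpace ℝ (Fin n),
      ‖Matrix.toEuclideanLin R v‖ ≤ (1 + ε) * ‖v‖ := by
    intro v
    have h1 : ‖Matrix.toEuclideanLin R v‖ ^ 2
        = ⟪v, Matrix.toEuclideanLin Rᵀ (Matrix.toEuclideanLin R v)⟫ := by
      rw [JLaux.norm_sq_ES]
      simp only [JLaux.inner_ES, JLaux.toEL_apply]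
      rw [← JLaux.dot_mulVec_eq]
    have h2 : ⟪v, Matrix.toEuclideanLin Rᵀ (Matrix.toEuclideanLin R v)⟫
        ≤ ‖v‖ * ((1 + ε) * ‖Matrix.toEuclideanLin R v‖) :=
      (real_inner_le_norm _ _).trans
        (mul_le_mul_of_nonneg_left (hPu_up _) (norm_nonneg v))
    rcases (norm_nonneg (Matrix.toEuclideanLin R v)).eq_or_lt with h0 | h0
    · rw [← h0]; exact mul_nonneg hb.le (norm_nonneg v)
    · refine le_of_mul_le_mul_right ?_ h0
      nlinarith [h1 ▸ h2]
  -- M is Hermitian and positive definite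
  have hMh : (R * Hess x * Rᵀ).IsHermitian := by
    rw [Matrix.IsHermitian, Matrix.conjTranspose_mul, Matrix.conjTranspose_mul,
      hCT Rᵀ, Matrix.transpose_transpose, hHerm.eq, hCT R, Matrix.mul_assoc]
  have hquadM : ∀ u : EuclideanSpace ℝ (Fin p),
      μ * ((1 - ε) * ‖u‖) ^ 2 ≤ ⟪Matrix.toEuclideanLin (R * Hess x * Rᵀ) u, u⟫ := by
    intro u
    have h1 : ⟪Matrix.toEuclideanLin (R * Hess x * Rᵀ) u, u⟫
        = ⟪Matrix.toEuclideanLin (Hess x) (Matrix.toEuclideanLin Rᵀ u),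
            Matrix.toEuclideanLin Rᵀ u⟫ := by
      simp only [JLaux.inner_ES, JLaux.toEL_apply]
      have h2 : (R * Hess x * Rᵀ) *ᵥ (WithLp.equiv 2 _ u)
          = R *ᵥ ((Hess x) *ᵥ (Rᵀ *ᵥ (WithLp.equiv 2 _ u))) := by
        rw [Matrix.mulVec_mulVec, Matrix.mulVec_mulVec, Matrix.mul_assoc]
      rw [h2, JLaux.dot_mulVec_eq]
    rw [h1]
    have h2 := hquadH x (Matrix.toEuclideanLin Rᵀ u)
    have h3 := hPu_lo u
    have h4 : μ * ((1 - ε) * ‖u‖) ^ 2 ≤ μ * ‖Matrix.toEuclideanLin Rᵀ u‖ ^ 2 := by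
      have h5 : 0 ≤ (1 - ε) * ‖u‖ := mul_nonneg ha.le (norm_nonneg u)
      nlinarith [mul_self_le_mul_self h5 h3, hμ.le]
    exact h4.trans h2
  have hMpd : (R * Hess x * Rᵀ).PosDef := by
    refine JLaux.posDef_of_quad hMh (c := μ * (1 - ε) ^ 2) (by positivity) fun u => ?_
    have h6 : μ * ((1 - ε) * ‖u‖) ^ 2 = μ * (1 - ε) ^ 2 * ‖u‖ ^ 2 := by ring
    exact (le_of_eq h6.symm).trans (hquadM u)
  have hMinv : (R * Hess x * Rᵀ) * (R * Hess x * Rᵀ)⁻¹ = 1 :=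
    Matrix.mul_nonsing_inv _ (isUnit_iff_ne_zero.mpr hMpd.det_pos.ne')

  -- the step
  have hs : xp - x
      = -(Matrix.toEuclideanLin (Rᵀ * (R * Hess x * Rᵀ)⁻¹ * R) (gradient f x)) := by
    rw [hxp]; abel
  have hd : Matrix.toEuclideanLin (Rᵀ * (R * Hess x * Rᵀ)⁻¹ * R) (gradient f x)
      = Matrix.toEuclideanLin Rᵀ (Matrix.toEuclideanLin ((R * Hess x * Rᵀ)⁻¹)
          (Matrix.toEuclideanLin R (gradient f x))) := by
    rw [JLaux.toEL_mul, JLaux.toEL_mul]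
  -- bound on z := M⁻¹ (R g)
  have hzb : μ * (1 - ε) ^ 2 * ‖Matrix.toEuclideanLin ((R * Hess x * Rᵀ)⁻¹)
        (Matrix.toEuclideanLin R (gradient f x))‖
      ≤ ‖Matrix.toEuclideanLin R (gradient f x)‖ := by
    have h1 := hquadM (Matrix.toEuclideanLin ((R * Hess x * Rᵀ)⁻¹)
      (Matrix.toEuclideanLin R (gradient f x)))
    have h2 : Matrix.toEuclideanLin (R * Hess x * Rᵀ)
        (Matrix.toEuclideanLin ((R * Hess x * Rᵀ)⁻¹)
          (Matrix.toEuclideanLin R (gradient f x)))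
        = Matrix.toEuclideanLin R (gradient f x) := by
      rw [← JLaux.toEL_mul, hMinv, JLaux.toEL_one]
    rw [h2] at h1
    have h3 := real_inner_le_norm (Matrix.toEuclideanLin R (gradient f x))
      (Matrix.toEuclideanLin ((R * Hess x * Rᵀ)⁻¹) (Matrix.toEuclideanLin R (gradient f x)))
    rcases (norm_nonneg (Matrix.toEuclideanLin ((R * Hess x * Rᵀ)⁻¹)
        (Matrix.toEuclideanLin R (gradient f x)))).eq_or_lt with h0 | h0
    · rw [← h0, mul_zero]; exact norm_nonneg _
    · refine le_of_mul_le_mul_right ?_ h0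
      nlinarith [h1, h3]
  -- bound on the step
  have hsb : μ * (1 - ε) ^ 2 * ‖xp - x‖ ≤ (1 + ε) ^ 2 * ‖gradient f x‖ := by
    have e1 : ‖xp - x‖ ≤ (1 + ε) * ‖Matrix.toEuclideanLin ((R * Hess x * Rᵀ)⁻¹)
        (Matrix.toEuclideanLin R (gradient f x))‖ := by
      rw [hs, norm_neg, hd]; exact hPu_up _
    have e2 : 0 ≤ μ * (1 - ε) ^ 2 := le_of_lt (mul_pos hμ (pow_pos ha 2))
    calc μ * (1 - ε) ^ 2 * ‖xp - x‖
        ≤ μ * (1 - ε) ^ 2 * ((1 + ε) * ‖Matrix.toEuclideanLin ((R * Hess x * Rᵀ)⁻¹)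
            (Matrix.toEuclideanLin R (gradient f x))‖) := mul_le_mul_of_nonneg_left e1 e2
      _ = (1 + ε) * (μ * (1 - ε) ^ 2 * ‖Matrix.toEuclideanLin ((R * Hess x * Rᵀ)⁻¹)
            (Matrix.toEuclideanLin R (gradient f x))‖) := by ring
      _ ≤ (1 + ε) * ‖Matrix.toEuclideanLin R (gradient f x)‖ :=
            mul_le_mul_of_nonneg_left hzb hb.le
      _ ≤ (1 + ε) * ((1 + ε) * ‖gradient f x‖) :=
            mul_le_mul_of_nonneg_left (hR_up _) hb.le
      _ = (1 + ε) ^ 2 * ‖gradient f x‖ := by ring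
  -- Newton identity
  have hmat : R * (Hess x * (Rᵀ * (R * Hess x * Rᵀ)⁻¹ * R)) = R := by
    have h1 : R * (Hess x * (Rᵀ * (R * Hess x * Rᵀ)⁻¹ * R))
        = (R * Hess x * Rᵀ) * ((R * Hess x * Rᵀ)⁻¹ * R) := by
      simp only [Matrix.mul_assoc]
    rw [h1, ← Matrix.mul_assoc, hMinv, Matrix.one_mul]
  have hNewt : Matrix.toEuclideanLin R
      (gradient f x + Matrix.toEuclideanLin (Hess x) (xp - x)) = 0 := by
    have h1 : Matrix.toEuclideanLin (Hess x) (xp - x)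
        = -(Matrix.toEuclideanLin (Hess x * (Rᵀ * (R * Hess x * Rᵀ)⁻¹ * R)) (gradient f x)) := by
      rw [hs, map_neg, ← JLaux.toEL_mul]
    rw [h1, map_add, map_neg, ← JLaux.toEL_mul, hmat, add_neg_cancel]
  -- Taylor bound
  have hTay := JLaux.taylor_bound f Hess hHess L hL hLip x (xp - x)
  rw [show x + (xp - x) = xp by abel] at hTay
  -- acceptance chain
  have hiacc : (1 - ε) * ‖gradient f xp‖ ≤ (1 + ε) * (L / 2 * ‖xp - x‖ ^ 2) := by
    have hsplit : Matrix.toEuclideanLin R (gradient f xp)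
        = Matrix.toEuclideanLin R
            (gradient f xp - gradient f x - Matrix.toEuclideanLin (Hess x) (xp - x)) := by
      conv_lhs => rw [show gradient f xp
        = (gradient f xp - gradient f x - Matrix.toEuclideanLin (Hess x) (xp - x))
          + (gradient f x + Matrix.toEuclideanLin (Hess x) (xp - x)) by abel]
      rw [map_add, hNewt, add_zero]
    calc (1 - ε) * ‖gradient f xp‖
        ≤ ‖Matrix.toEuclideanLin R (gradient f xp)‖ := hacc
      _ = ‖Matrix.toEuclideanLin R
            (gradient f xp - gradient f x - Matrix.toEuclideanLin (Hess x) (xp - x))‖ := by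
          rw [hsplit]
      _ ≤ (1 + ε) * ‖gradient f xp - gradient f x
            - Matrix.toEuclideanLin (Hess x) (xp - x)‖ := hR_up _
      _ ≤ (1 + ε) * (L / 2 * ‖xp - x‖ ^ 2) := mul_le_mul_of_nonneg_left hTay hb.le
  -- final arithmetic
  have hS2 : (μ * (1 - ε) ^ 2 * ‖xp - x‖) ^ 2 ≤ ((1 + ε) ^ 2 * ‖gradient f x‖) ^ 2 :=
    pow_le_pow_left₀ (mul_nonneg (mul_nonneg hμ.le (sq_nonneg _)) (norm_nonneg _)) hsb 2
  have hgoal' : L / (2 * μ ^ 2) * ((1 + ε) / (1 - ε)) ^ 5 * ‖gradient f x‖ ^ 2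
      = (L * (1 + ε) ^ 5 * ‖gradient f x‖ ^ 2) / (2 * μ ^ 2 * (1 - ε) ^ 5) := by
    field_simp
  rw [hgoal', le_div_iff₀ (mul_pos (mul_pos two_pos (pow_pos hμ 2)) (pow_pos ha 5))]
  nlinarith [mul_le_mul_of_nonneg_left hiacc
      (le_of_lt (mul_pos (pow_pos hμ 2) (pow_pos ha 4))),
    mul_le_mul_of_nonneg_left hS2 (mul_nonneg hL.le hb.le),
    norm_nonneg (gradient f xp), norm_nonneg (gradient f x), norm_nonneg (xp - x)]

end
end

section
/- Let f : ℝⁿ → ℝ be twice continuously differentiable with positive definite Hessian at every point. Let R ∈ ℝ^{p×n} have full row rank p ≤ n, P := Rᵀ, and let d := −P(R∇²f(x)P)⁻¹R∇f(x) be the coarse direction at x ∈ ℝⁿ, with x⁺ := x + d. Then R∇f(x⁺) = −R(∇²f(x) − G) d, where G := ∫₀¹ ∇²f(x + t d) dt is the averaged Hessian along the segment from x to x⁺. -/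
open Matrix

noncomputable section

/-- Taylor-type identity for the coarse step: with
`d = −P(R∇²f(x)P)⁻¹R∇f(x)`, `x⁺ = x + d` and the averaged Hessian
`G = ∫₀¹ ∇²f(x + t d) dt` (entrywise), one has `R∇f(x⁺) = −R(∇²f(x) − G)d`. -/
theorem reduced_gradient_taylor_identity
    {n p : ℕ} (hp : p ≤ n)
    (f : EuclideanSpace ℝ (Fin n) → ℝ)
    (hf : ContDiff ℝ 2 f)
    (Hess : EuclideanSpace ℝ (Fin n) → Matrix (Fin n) (Fin n) ℝ)
    (hHess : ∀ y, HasFDerivAt (gradient f) (Matrix.toEuclideanCLM (𝕜 := ℝ) (Hess y)) y)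
    (hPD : ∀ y, (Hess y).PosDef)
    (R : Matrix (Fin p) (Fin n) ℝ) (hR : R.rank = p)
    (x d xp : EuclideanSpace ℝ (Fin n))
    (hd : d = -(Matrix.toEuclideanLin (Rᵀ * (R * Hess x * Rᵀ)⁻¹ * R) (gradient f x)))
    (hxp : xp = x + d)
    (G : Matrix (Fin n) (Fin n) ℝ)
    (hG : G = Matrix.of fun i j => ∫ t in (0:ℝ)..1, Hess (x + t • d) i j) :
    Matrix.toEuclideanLin R (gradient f xp) =
      -(Matrix.toEuclideanLin (R * (Hess x - G)) d) := by
  classical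
  set A := R * Hess x * Rᵀ with hA
  -- full row rank: the rows of R are linearly independent
  have hRows : LinearIndependent ℝ (fun i => R i) := by
    apply linearIndependent_iff_card_eq_finrank_span.mpr
    have h1 := R.rank_eq_finrank_span_row
    rw [hR] at h1
    simp only [Fintype.card_fin, Set.finrank]
    exact h1
  have hRTinj : Function.Injective (Rᵀ.mulVec) := by
    rw [Matrix.mulVec_injective_iff]
    simpa [Matrix.row] using hRows
  -- A = R (Hess x) Rᵀ is positive definite, hence invertible
  have hAPD : A.PosDef := by
    refine Matrix.PosDef.of_dotProduct_mulVec_pos ?_ ?_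
    · have := Matrix.isHermitian_mul_mul_conjTranspose R (hPD x).1
      rwa [Matrix.conjTranspose_eq_transpose_of_trivial] at this
    · intro v hv
      have hu : Rᵀ *ᵥ v ≠ 0 := fun h0 => hv (hRTinj (by simpa using h0))
      have hpos := (hPD x).dotProduct_mulVec_pos hu
      rw [star_trivial, Matrix.mulVec_transpose] at hpos
      have e1 : star v ⬝ᵥ (A *ᵥ v) = (v ᵥ* R) ⬝ᵥ (Hess x *ᵥ (v ᵥ* R)) := by
        rw [star_trivial, hA, Matrix.mul_assoc, ← Matrix.mulVec_mulVec,
          Matrix.dotProduct_mulVec, ← Matrix.mulVec_mulVec, Matrix.mulVec_transpose]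
      rw [e1]
      exact hpos
  have hAinv : A * A⁻¹ = 1 := Matrix.mul_nonsing_inv _ (isUnit_iff_isUnit_det _ |>.mp hAPD.isUnit)
  -- the gradient is C¹, hence the Hessian field is continuous
  have hgrad1 : ContDiff ℝ 1 (gradient f) := by
    have h2 : ContDiff ℝ ((1 : WithTop ℕ∞) + 1) f := by rw [one_add_one_eq_two]; exact hf
    exact (InnerProductSpace.toDual ℝ _).symm.contDiff.comp
      (contDiff_succ_iff_fderiv.mp h2).2.2
  have hHcont : Continuous fun y => Matrix.toEuclideanCLM (𝕜 := ℝ) (Hess y) := by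
    have heq : (fun y => Matrix.toEuclideanCLM (𝕜 := ℝ) (Hess y)) = fderiv ℝ (gradient f) :=
      funext fun y => ((hHess y).fderiv).symm
    rw [heq]
    exact hgrad1.continuous_fderiv one_ne_zero
  have hline : Continuous fun t : ℝ => x + t • d :=
    continuous_const.add (continuous_id.smul continuous_const)
  -- fundamental theorem of calculus along the segment
  have hg : ∀ t : ℝ, HasDerivAt (fun s : ℝ => gradient f (x + s • d))
      (Matrix.toEuclideanCLM (𝕜 := ℝ) (Hess (x + t • d)) d) t := by
    intro t
    have hL : HasDerivAt (fun s : ℝ => x + s • d) d t := by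
      simpa using ((hasDerivAt_id t).smul_const d).const_add x
    exact (hHess (x + t • d)).comp_hasDerivAt t hL
  have hcont : Continuous fun t : ℝ =>
      Matrix.toEuclideanCLM (𝕜 := ℝ) (Hess (x + t • d)) d :=
    (hHcont.comp hline).clm_apply continuous_const
  have hInt : IntervalIntegrable
      (fun t : ℝ => Matrix.toEuclideanCLM (𝕜 := ℝ) (Hess (x + t • d)) d)
      MeasureTheory.volume 0 1 := hcont.intervalIntegrable 0 1
  have key : (∫ t in (0:ℝ)..1, Matrix.toEuclideanCLM (𝕜 := ℝ) (Hess (x + t • d)) d)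
      = gradient f xp - gradient f x := by
    rw [intervalIntegral.integral_eq_sub_of_hasDerivAt (fun t _ => hg t) hInt]
    simp [hxp]
  -- continuity of the Hessian entries along the segment
  have hentry : ∀ i j, Continuous fun t : ℝ => Hess (x + t • d) i j := by
    intro i j
    have h1 : Continuous fun t : ℝ =>
        (EuclideanSpace.proj i) (Matrix.toEuclideanCLM (𝕜 := ℝ) (Hess (x + t • d))
          ((WithLp.equiv 2 (Fin n → ℝ)).symm (Pi.single j 1))) :=
      (EuclideanSpace.proj i).continuous.comp
        ((hHcont.comp hline).clm_apply continuous_const)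
    refine h1.congr fun t => ?_
    simp only [WithLp.equiv_symm_apply, Matrix.toEuclideanCLM_toLp]
    simp [Matrix.mulVec_single]
  -- averaged Hessian identity: G d = ∇f(x⁺) − ∇f(x)
  have hGd : G *ᵥ (WithLp.equiv 2 (Fin n → ℝ) d)
      = WithLp.equiv 2 (Fin n → ℝ) (gradient f xp - gradient f x) := by
    funext i
    have h3 : (gradient f xp - gradient f x) i
        = ∫ t in (0:ℝ)..1,
            (Matrix.toEuclideanCLM (𝕜 := ℝ) (Hess (x + t • d)) d) i := by
      rw [← key]
      have h := (EuclideanSpace.proj (𝕜 := ℝ) i).intervalIntegral_comp_comm hInt (a := 0) (b := 1)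
      simpa using h.symm
    have h4 : ∀ t : ℝ, (Matrix.toEuclideanCLM (𝕜 := ℝ) (Hess (x + t • d)) d) i
        = ∑ j, Hess (x + t • d) i j * WithLp.equiv 2 (Fin n → ℝ) d j := by
      intro t
      have hdd : d = (WithLp.equiv 2 (Fin n → ℝ)).symm (WithLp.equiv 2 (Fin n → ℝ) d) := rfl
      rw [hdd]
      simp only [WithLp.equiv_symm_apply, Matrix.toEuclideanCLM_toLp]
      simp [Matrix.mulVec, dotProduct]
    have h5 : (∫ t in (0:ℝ)..1, (Matrix.toEuclideanCLM (𝕜 := ℝ) (Hess (x + t • d)) d) i)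
        = ∑ j, (∫ t in (0:ℝ)..1, Hess (x + t • d) i j) * WithLp.equiv 2 (Fin n → ℝ) d j := by
      simp_rw [h4]
      rw [intervalIntegral.integral_finset_sum]
      · exact Finset.sum_congr rfl fun j _ => intervalIntegral.integral_mul_const _ _
      · intro j _
        exact ((hentry i j).mul continuous_const).intervalIntegrable 0 1
    have h6 : (G *ᵥ (WithLp.equiv 2 (Fin n → ℝ) d)) i
        = ∑ j, (∫ t in (0:ℝ)..1, Hess (x + t • d) i j) * WithLp.equiv 2 (Fin n → ℝ) d j := by
      simp [hG, Matrix.mulVec, dotProduct]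
    rw [h6, ← h5]
    exact h3.symm
  -- coarse-direction identity: R (Hess x) d = −R ∇f(x)
  have hd' : WithLp.equiv 2 (Fin n → ℝ) d
      = -((Rᵀ * A⁻¹ * R) *ᵥ WithLp.equiv 2 (Fin n → ℝ) (gradient f x)) := by
    rw [hd, Matrix.toEuclideanLin_apply]
    rfl
  have hRHR : R * Hess x * (Rᵀ * A⁻¹ * R) = R := by
    calc R * Hess x * (Rᵀ * A⁻¹ * R) = A * A⁻¹ * R := by
          simp only [hA, Matrix.mul_assoc]
      _ = R := by rw [hAinv, Matrix.one_mul]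
  have hHd : R *ᵥ (Hess x *ᵥ WithLp.equiv 2 (Fin n → ℝ) d)
      = -(R *ᵥ WithLp.equiv 2 (Fin n → ℝ) (gradient f x)) := by
    rw [hd']
    simp only [Matrix.mulVec_neg, Matrix.mulVec_mulVec]
    rw [← Matrix.mul_assoc, hRHR]
  -- assemble
  rw [Matrix.toEuclideanLin_apply, Matrix.toEuclideanLin_apply, ← WithLp.toLp_neg]
  congr 1
  show R *ᵥ WithLp.equiv 2 (Fin n → ℝ) (gradient f xp) = -((R * (Hess x - G)) *ᵥ WithLp.equiv 2 (Fin n → ℝ) d)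
  have hsplit : (R * (Hess x - G)) *ᵥ WithLp.equiv 2 (Fin n → ℝ) d
      = R *ᵥ (Hess x *ᵥ WithLp.equiv 2 (Fin n → ℝ) d)
        - R *ᵥ (G *ᵥ WithLp.equiv 2 (Fin n → ℝ) d) := by
    rw [← Matrix.mulVec_mulVec, Matrix.sub_mulVec, Matrix.mulVec_sub]
  rw [hsplit, hHd, hGd, show WithLp.equiv 2 (Fin n → ℝ) (gradient f xp - gradient f x) = WithLp.equiv 2 (Fin n → ℝ) (gradient f xp) - WithLp.equiv 2 (Fin n → ℝ) (gradient f x) from rfl, Matrix.mulVec_sub]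
  abel

end
end
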